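/- arXiv:1509.07383 — 3 statements merged into one kernel-verified Lean document; each statement's English description precedes it below -/
import Mathlib

section
/- Assume ψ(1) = 1 and ψ(2) < 1. Then p(i,j) := M(i,j)·j/i defines a stochastic transition matrix on the positive integers (Σ_{j≥1} p(i,j) = 1 for every i), and for the Markov chain (N_n) with transition probabilities p started at N_0 = 1, the first return time γ := inf{n ≥ 1 : N_n = 1} has an exponential moment: there exists r > 0 with E[exp(r·γ)] < ∞. -/
open MeasureTheory
open scoped ENNReal Classical

/-- `ψ(t) = E[Σ_{k=1}^N e^{-t·V_k}]`, the Laplace transform of the first generation of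
the branching random walk with `N` children and displacements `(V_k)`. -/
noncomputable def psiFn {Ω : Type*} [MeasurableSpace Ω] (μ : Measure Ω)
    (N : Ω → ℕ) (V : ℕ → Ω → ℝ) (t : ℝ) : ℝ≥0∞ :=
  ∫⁻ ω, ENNReal.ofReal (∑ k ∈ Finset.range (N ω), Real.exp (-t * V k ω)) ∂μ

/-- The mean matrix `M(i,j) = E[Σ_{k=1}^N (i+j-1 choose j)·e^{-j·V_k}/(1+e^{-V_k})^{i+j}]`. -/
noncomputable def Mbrw {Ω : Type*} [MeasurableSpace Ω] (μ : Measure Ω)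
    (N : Ω → ℕ) (V : ℕ → Ω → ℝ) (i j : ℕ) : ℝ≥0∞ :=
  ∫⁻ ω, ENNReal.ofReal (∑ k ∈ Finset.range (N ω),
      ((i + j - 1).choose j : ℝ) * Real.exp (-(j : ℝ) * V k ω) /
        (1 + Real.exp (-V k ω)) ^ (i + j)) ∂μ

/-- The tilted transition probabilities `p(i,j) = M(i,j)·j/i`. -/
noncomputable def ptilt {Ω : Type*} [MeasurableSpace Ω] (μ : Measure Ω)
    (N : Ω → ℕ) (V : ℕ → Ω → ℝ) (i j : ℕ) : ℝ≥0∞ :=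
  Mbrw μ N V i j * (j : ℝ≥0∞) / (i : ℝ≥0∞)

/-- The first return time to state `1` of a trajectory `ω` (junk value if there is
no return, so it must always be used together with the event `∃ n ≥ 1, ω n = 1`). -/
noncomputable def retTime (ω : ℕ → ℕ) : ℕ :=
  sInf {n : ℕ | 1 ≤ n ∧ ω n = 1}

set_option linter.unusedVariables false
set_option linter.unusedSectionVars false
set_option maxHeartbeats 1000000


lemma negBinom_summable (i : ℕ) {x : ℝ} (h0 : 0 ≤ x) (h1 : x < 1) :
    Summable (fun j : ℕ => ((i + j).choose i : ℝ) * x ^ j) := by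
  have hb : ∀ j : ℕ, ((i + j).choose i : ℝ) * x ^ j ≤
      ((2*i:ℕ)^i : ℝ) * x ^ j + (2:ℝ)^i * ((j:ℝ)^i * x ^ j) := by
    intro j
    have hxj : (0:ℝ) ≤ x ^ j := pow_nonneg h0 j
    have hnat : (i + j).choose i ≤ (2*i)^i + 2^i * j^i := by
      calc (i + j).choose i ≤ (i+j)^i := Nat.choose_le_pow _ _
        _ ≤ (2*i)^i + 2^i * j^i := by
          rcases le_total j i with h | h
          · have : (i+j)^i ≤ (2*i)^i := Nat.pow_le_pow_left (by omega) i
            omega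
          · have : (i+j)^i ≤ (2*j)^i := Nat.pow_le_pow_left (by omega) i
            rw [Nat.mul_pow] at this
            omega
    have hcast : ((i + j).choose i : ℝ) ≤ ((2*i:ℕ)^i : ℝ) + (2:ℝ)^i * (j:ℝ)^i := by
      calc ((i + j).choose i : ℝ) ≤ (((2*i)^i + 2^i * j^i : ℕ) : ℝ) := by exact_mod_cast hnat
        _ = ((2*i:ℕ)^i : ℝ) + (2:ℝ)^i * (j:ℝ)^i := by push_cast; ring
    nlinarith [mul_le_mul_of_nonneg_right hcast hxj]
  apply Summable.of_nonneg_of_le (fun j => by positivity) hb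
  apply Summable.add
  · exact (summable_geometric_of_lt_one h0 h1).mul_left _
  · apply Summable.mul_left
    have := summable_pow_mul_geometric_of_norm_lt_one (R := ℝ) i (r := x)
      (by rw [Real.norm_eq_abs, abs_of_nonneg h0]; exact h1)
    exact this

lemma negBinom_hasSum (i : ℕ) {x : ℝ} (h0 : 0 ≤ x) (h1 : x < 1) :
    HasSum (fun j : ℕ => ((i + j).choose i : ℝ) * x ^ j) (((1 - x) ^ (i + 1))⁻¹) := by
  have hx1 : (0:ℝ) < 1 - x := by linarith
  induction i with
  | zero => simpa using hasSum_geometric_of_lt_one h0 h1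
  | succ i IH =>
    set f : ℕ → ℝ := fun j => ((i + 1 + j).choose (i+1) : ℝ) * x ^ j with hf
    have hsum : Summable f := by
      have := negBinom_summable (i+1) h0 h1
      simpa [hf, add_comm, add_assoc, add_left_comm] using this
    obtain ⟨S, hS⟩ := hsum
    -- e j = C(i+j, i+1) x^j
    set e : ℕ → ℝ := fun j => ((i + j).choose (i+1) : ℝ) * x ^ j with he
    have he1 : ∀ j, e (j + 1) = x * f j := by
      intro j
      simp only [he, hf]
      have : i + (j+1) = i + 1 + j := by omega
      rw [this]; ring
    have heS : HasSum e (x * S) := by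
      have h2 : HasSum (fun j => e (j + 1)) (x * S) := by
        simpa [he1] using hS.mul_left x
      have := (hasSum_nat_add_iff (f := e) 1).mp h2
      simpa [he] using this
    have hfg : ∀ j, f j = ((i + j).choose i : ℝ) * x ^ j + e j := by
      intro j
      simp only [hf, he]
      have : (i + 1 + j).choose (i+1) = (i+j).choose i + (i+j).choose (i+1) := by
        have := Nat.choose_succ_succ (i + j) i
        have h3 : i + 1 + j = (i+j) + 1 := by omega
        rw [h3, this]
      rw [this]; push_cast; ring
    have hfS2 : HasSum f (((1 - x) ^ (i + 1))⁻¹ + x * S) := by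
      have := IH.add heS
      simpa [← hfg] using this
    have hSeq : S = ((1 - x) ^ (i + 1))⁻¹ + x * S := hS.unique hfS2
    have hmul : S * (1 - x) = ((1 - x) ^ (i + 1))⁻¹ := by linear_combination hSeq
    have hSval : S = ((1 - x) ^ (i + 1 + 1))⁻¹ := by
      have hne : (1 - x) ≠ 0 := ne_of_gt hx1
      rw [pow_succ, mul_inv, ← hmul, mul_assoc, mul_inv_cancel₀ hne, mul_one]
    rw [← hSval]; exact hS




noncomputable def brwTerm (i m : ℕ) (u : ℝ) : ℝ :=
  ((i + m).choose (m + 1) : ℝ) * u ^ (m + 1) / (1 + u) ^ (i + m + 1)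

lemma brw_id1 {i : ℕ} (hi : 1 ≤ i) (m : ℕ) :
    (m + 1) * ((i + m).choose (m + 1)) = i * ((i + m).choose i) := by
  obtain ⟨l, rfl⟩ : ∃ l, i = l + 1 := ⟨i - 1, by omega⟩
  have h1 := Nat.add_one_mul_choose_eq (l + m) m
  have h2 := Nat.add_one_mul_choose_eq (l + m) l
  have h3 : (l + m).choose m = (l + m).choose l := by
    rw [show l + m = m + l by omega]
    exact Nat.choose_symm_add
  have e1 : l + 1 + m = (l + m) + 1 := by omega
  rw [e1, mul_comm, ← h1, h3, h2, mul_comm]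

lemma brw_id2 (i m : ℕ) :
    (i + m + 1) * ((i + m).choose i) = (i + 1) * ((i + m + 1).choose (i + 1)) := by
  have h := Nat.add_one_mul_choose_eq (i + m) i
  rw [h, mul_comm]

lemma brw_x_nonneg {u : ℝ} (hu : 0 < u) : 0 ≤ u / (1 + u) := by positivity

lemma brw_x_lt_one {u : ℝ} (hu : 0 < u) : u / (1 + u) < 1 := by
  rw [div_lt_one (by linarith)]; linarith

lemma brw_one_sub_x {u : ℝ} (hu : 0 < u) : 1 - u / (1 + u) = 1 / (1 + u) := by
  have : (1:ℝ) + u ≠ 0 := by positivity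
  field_simp
  ring

lemma brw_shape {u : ℝ} (hu : 0 < u) (c : ℝ) (i m : ℕ) :
    c * (u / (1 + u)) ^ m * (u / (1 + u) ^ (i + 1)) = c * u ^ (m + 1) / (1 + u) ^ (i + m + 1) := by
  have h1 : (0:ℝ) < 1 + u := by linarith
  rw [div_pow]
  field_simp
  ring

lemma brw_pow_inv {u : ℝ} (hu : 0 < u) (k : ℕ) :
    ((1 - u / (1 + u)) ^ k)⁻¹ = (1 + u) ^ k := by
  rw [brw_one_sub_x hu, div_pow, one_pow, inv_div, div_one]

/-- Σ_m (m+1)·brwTerm i m u = i·u -/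
lemma brw_hasSum1 {i : ℕ} (hi : 1 ≤ i) {u : ℝ} (hu : 0 < u) :
    HasSum (fun m : ℕ => ((m : ℝ) + 1) * brwTerm i m u) ((i : ℝ) * u) := by
  have h1 : (0:ℝ) < 1 + u := by linarith
  have hbase := (negBinom_hasSum i (brw_x_nonneg hu) (brw_x_lt_one hu)).mul_right
    ((i : ℝ) * (u / (1 + u) ^ (i + 1)))
  rw [brw_pow_inv hu] at hbase
  have hsumval : ((1:ℝ) + u) ^ (i + 1) * ((i:ℝ) * (u / (1 + u) ^ (i + 1))) = (i:ℝ) * u := by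
    field_simp
  rw [hsumval] at hbase
  have hpt : ∀ m : ℕ, ((i + m).choose i : ℝ) * (u / (1 + u)) ^ m * ((i:ℝ) * (u / (1 + u) ^ (i + 1)))
      = ((m : ℝ) + 1) * brwTerm i m u := by
    intro m
    have c1 : ((m:ℝ) + 1) * (((i + m).choose (m+1)) : ℝ) = (i:ℝ) * (((i + m).choose i) : ℝ) := by
      exact_mod_cast congrArg (Nat.cast : ℕ → ℝ) (brw_id1 hi m)
    calc ((i + m).choose i : ℝ) * (u / (1 + u)) ^ m * ((i:ℝ) * (u / (1 + u) ^ (i + 1)))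
        = ((i:ℝ) * (((i + m).choose i) : ℝ)) * (u / (1 + u)) ^ m * (u / (1 + u) ^ (i + 1)) := by
          ring
      _ = ((i:ℝ) * (((i + m).choose i) : ℝ)) * u ^ (m + 1) / (1 + u) ^ (i + m + 1) :=
          brw_shape hu _ i m
      _ = ((m : ℝ) + 1) * brwTerm i m u := by
          unfold brwTerm
          linear_combination (u ^ (m+1) / (1 + u) ^ (i + m + 1)) * c1.symm
  exact hbase.congr_fun (fun m => (hpt m).symm)

/-- Σ_m (m+1)²·brwTerm i m u = i·(u + (i+1)·u²) -/
lemma brw_hasSum2 {i : ℕ} (hi : 1 ≤ i) {u : ℝ} (hu : 0 < u) :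
    HasSum (fun m : ℕ => ((m : ℝ) + 1) ^ 2 * brwTerm i m u)
      ((i : ℝ) * (u + ((i : ℝ) + 1) * u ^ 2)) := by
  have h1 : (0:ℝ) < 1 + u := by linarith
  have hA := (negBinom_hasSum (i+1) (brw_x_nonneg hu) (brw_x_lt_one hu)).mul_right
    (((i:ℝ) * ((i:ℝ) + 1)) * (u / (1 + u) ^ (i + 1)))
  have hB := (negBinom_hasSum i (brw_x_nonneg hu) (brw_x_lt_one hu)).mul_right
    (((i:ℝ) * (i:ℝ)) * (u / (1 + u) ^ (i + 1)))
  rw [brw_pow_inv hu] at hA hB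
  have hAval : ((1:ℝ) + u) ^ (i + 1 + 1) * (((i:ℝ) * ((i:ℝ)+1)) * (u / (1 + u) ^ (i + 1)))
      = (i:ℝ) * ((i:ℝ)+1) * (u * (1 + u)) := by
    rw [pow_succ]
    field_simp
  have hBval : ((1:ℝ) + u) ^ (i + 1) * (((i:ℝ) * (i:ℝ)) * (u / (1 + u) ^ (i + 1)))
      = (i:ℝ) * (i:ℝ) * u := by
    field_simp
  rw [hAval] at hA
  rw [hBval] at hB
  have hsub := hA.sub hB
  have hval : (i:ℝ) * ((i:ℝ)+1) * (u * (1 + u)) - (i:ℝ) * (i:ℝ) * u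
      = (i : ℝ) * (u + ((i : ℝ) + 1) * u ^ 2) := by ring
  rw [hval] at hsub
  apply hsub.congr_fun
  intro m
  have c1 : ((m:ℝ) + 1) * (((i + m).choose (m+1)) : ℝ) = (i:ℝ) * (((i + m).choose i) : ℝ) := by
    exact_mod_cast congrArg (Nat.cast : ℕ → ℝ) (brw_id1 hi m)
  have c2 : ((i:ℝ) + (m:ℝ) + 1) * (((i + m).choose i) : ℝ)
      = ((i:ℝ) + 1) * (((i + m + 1).choose (i+1)) : ℝ) := by
    exact_mod_cast congrArg (Nat.cast : ℕ → ℝ) (brw_id2 i m)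
  have hc : ((m:ℝ) + 1) ^ 2 * (((i + m).choose (m+1)) : ℝ)
      = (i:ℝ) * ((i:ℝ)+1) * (((i + 1 + m).choose (i+1)) : ℝ)
        - (i:ℝ) * (i:ℝ) * (((i + m).choose i) : ℝ) := by
    have e3 : i + 1 + m = i + m + 1 := by omega
    rw [e3]
    linear_combination ((m:ℝ)+1) * c1 + (i:ℝ) * c2
  calc ((m : ℝ) + 1) ^ 2 * brwTerm i m u
      = ((i:ℝ) * ((i:ℝ)+1) * (((i + 1 + m).choose (i+1)) : ℝ)) * u ^ (m + 1) / (1 + u) ^ (i + m + 1)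
        - ((i:ℝ) * (i:ℝ) * (((i + m).choose i) : ℝ)) * u ^ (m + 1) / (1 + u) ^ (i + m + 1) := by
        unfold brwTerm
        linear_combination (u ^ (m+1) / (1 + u) ^ (i + m + 1)) * hc
    _ = ((i + 1 + m).choose (i+1) : ℝ) * (u / (1 + u)) ^ m * ((i:ℝ) * ((i:ℝ)+1) * (u / (1 + u) ^ (i + 1)))
        - ((i + m).choose i : ℝ) * (u / (1 + u)) ^ m * ((i:ℝ) * (i:ℝ) * (u / (1 + u) ^ (i + 1))) := by
        rw [← brw_shape hu ((i:ℝ) * ((i:ℝ)+1) * (((i + 1 + m).choose (i+1)) : ℝ)) i m,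
            ← brw_shape hu ((i:ℝ) * (i:ℝ) * (((i + m).choose i) : ℝ)) i m]
        ring



section Layer3

variable {Ω : Type*} [MeasurableSpace Ω] (μ : Measure Ω) [IsProbabilityMeasure μ]
  (N : Ω → ℕ) (V : ℕ → Ω → ℝ)

/-- measurability helper -/
lemma meas_ofReal_sum (hN : Measurable N) (g : ℕ → Ω → ℝ) (hg : ∀ k, Measurable (g k))
    (hg0 : ∀ k ω, 0 ≤ g k ω) :
    Measurable fun ω => ENNReal.ofReal (∑ k ∈ Finset.range (N ω), g k ω) := by
  have heq : (fun ω => ENNReal.ofReal (∑ k ∈ Finset.range (N ω), g k ω))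
      = fun ω => ∑' k : ℕ, if k < N ω then ENNReal.ofReal (g k ω) else 0 := by
    funext ω
    rw [ENNReal.ofReal_sum_of_nonneg (fun i _ => hg0 i ω),
      tsum_eq_sum (s := Finset.range (N ω)) (f := fun k => if k < N ω then ENNReal.ofReal (g k ω) else 0)
        (by intro k hk; simp only [Finset.mem_range] at hk; simp [hk])]
    exact (Finset.sum_congr rfl fun k hk => by simp [Finset.mem_range.mp hk]).symm
  rw [heq]
  apply Measurable.ennreal_tsum
  intro k
  have hs : MeasurableSet {ω | k < N ω} := hN measurableSet_Ioi
  exact Measurable.ite hs ((hg k).ennreal_ofReal) measurable_const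

lemma brwTerm_meas (i m k : ℕ) (hV : ∀ k, Measurable (V k)) :
    Measurable fun ω => brwTerm i m (Real.exp (-V k ω)) := by
  unfold brwTerm
  exact (measurable_const.mul (((hV k).neg.exp).pow_const _)).div
    ((measurable_const.add (hV k).neg.exp).pow_const _)

lemma brwTerm_nonneg (i m : ℕ) {u : ℝ} (hu : 0 < u) : 0 ≤ brwTerm i m u := by
  unfold brwTerm; positivity

lemma brwTerm_pos {i : ℕ} (hi : 1 ≤ i) {u : ℝ} (hu : 0 < u) : 0 < brwTerm i 0 u := by
  unfold brwTerm
  have h1 : (i + 0).choose (0 + 1) = i := by simp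
  rw [h1]
  have : (0:ℕ) < i := hi
  positivity

/-- `Mbrw i (m+1)` in terms of `brwTerm`. -/
lemma Mbrw_eq (i m : ℕ) :
    Mbrw μ N V i (m + 1)
      = ∫⁻ ω, ENNReal.ofReal (∑ k ∈ Finset.range (N ω), brwTerm i m (Real.exp (-V k ω))) ∂μ := by
  unfold Mbrw
  congr 1
  funext ω
  congr 1
  apply Finset.sum_congr rfl
  intro k _
  unfold brwTerm
  have h1 : i + (m + 1) - 1 = i + m := by omega
  have h2 : i + (m + 1) = i + m + 1 := by omega
  rw [h1, h2]
  congr 2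
  have : -((((m:ℕ) + 1 : ℕ) : ℝ)) * V k ω = (((m + 1 : ℕ) : ℝ)) * (-V k ω) := by push_cast; ring
  rw [this, Real.exp_nat_mul]

/-- The key swap lemma. -/
lemma key_swap (hN : Measurable N) (hV : ∀ k, Measurable (V k)) (i : ℕ) (hi : 1 ≤ i)
    (w : ℕ → ℝ) (hw0 : ∀ m, 0 ≤ w m) (A : ℝ → ℝ)
    (hA : ∀ u : ℝ, 0 < u → HasSum (fun m => w m * brwTerm i m u) (A u)) :
    ∑' m : ℕ, ENNReal.ofReal (w m) * Mbrw μ N V i (m + 1)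
      = ∫⁻ ω, ∑ k ∈ Finset.range (N ω), ENNReal.ofReal (A (Real.exp (-V k ω))) ∂μ := by
  have hmeas : ∀ m : ℕ, Measurable fun ω =>
      ENNReal.ofReal (∑ k ∈ Finset.range (N ω), brwTerm i m (Real.exp (-V k ω))) :=
    fun m => meas_ofReal_sum N hN _ (fun k => brwTerm_meas V i m k hV)
      (fun k ω => brwTerm_nonneg i m (Real.exp_pos _))
  calc ∑' m : ℕ, ENNReal.ofReal (w m) * Mbrw μ N V i (m + 1)
      = ∑' m : ℕ, ∫⁻ ω, ENNReal.ofReal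
          (∑ k ∈ Finset.range (N ω), w m * brwTerm i m (Real.exp (-V k ω))) ∂μ := by
        apply tsum_congr
        intro m
        rw [Mbrw_eq μ N V i m, ← lintegral_const_mul _ (hmeas m)]
        congr 1
        funext ω
        rw [← ENNReal.ofReal_mul (hw0 m), Finset.mul_sum]
    _ = ∫⁻ ω, ∑' m : ℕ, ENNReal.ofReal
          (∑ k ∈ Finset.range (N ω), w m * brwTerm i m (Real.exp (-V k ω))) ∂μ := by
        rw [lintegral_tsum]
        intro m
        apply Measurable.aemeasurable
        apply meas_ofReal_sum N hN _ (fun k => (measurable_const.mul (brwTerm_meas V i m k hV)))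
        intro k ω
        exact mul_nonneg (hw0 m) (brwTerm_nonneg i m (Real.exp_pos _))
    _ = ∫⁻ ω, ∑ k ∈ Finset.range (N ω), ENNReal.ofReal (A (Real.exp (-V k ω))) ∂μ := by
        congr 1
        funext ω
        have step1 : ∀ m : ℕ, ENNReal.ofReal
            (∑ k ∈ Finset.range (N ω), w m * brwTerm i m (Real.exp (-V k ω)))
            = ∑ k ∈ Finset.range (N ω), ENNReal.ofReal (w m * brwTerm i m (Real.exp (-V k ω))) :=
          fun m => ENNReal.ofReal_sum_of_nonneg
            (fun k _ => mul_nonneg (hw0 m) (brwTerm_nonneg i m (Real.exp_pos _)))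
        simp_rw [step1]
        rw [Summable.tsum_finsetSum (fun k _ => ENNReal.summable)]
        apply Finset.sum_congr rfl
        intro k _
        have hu := Real.exp_pos (-V k ω)
        rw [← ENNReal.ofReal_tsum_of_nonneg
          (fun m => mul_nonneg (hw0 m) (brwTerm_nonneg i m hu)) (hA _ hu).summable]
        rw [(hA _ hu).tsum_eq]

lemma psi1' (hψ1 : psiFn μ N V 1 = 1) :
    ∫⁻ ω, ENNReal.ofReal (∑ k ∈ Finset.range (N ω), Real.exp (-V k ω)) ∂μ = 1 := by
  rw [← hψ1]
  unfold psiFn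
  congr 1
  funext ω
  congr 1
  exact Finset.sum_congr rfl fun k _ => by norm_num

lemma psi2' : ∫⁻ ω, ENNReal.ofReal (∑ k ∈ Finset.range (N ω), Real.exp (-V k ω) ^ 2) ∂μ
    = psiFn μ N V 2 := by
  unfold psiFn
  congr 1
  funext ω
  congr 1
  apply Finset.sum_congr rfl
  intro k _
  rw [show -(2:ℝ) * V k ω = ((2:ℕ):ℝ) * (-V k ω) by push_cast; ring, Real.exp_nat_mul]

/-- F1: row sums are 1 -/
lemma rowsum1 (hN : Measurable N) (hV : ∀ k, Measurable (V k)) (hψ1 : psiFn μ N V 1 = 1) (i : ℕ) (hi : 1 ≤ i) :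
    ∑' m : ℕ, ptilt μ N V i (m + 1) = 1 := by
  have hiR : ((i:ℝ≥0∞)) ≠ 0 := by exact_mod_cast (by omega : i ≠ 0)
  have hiT : ((i:ℝ≥0∞)) ≠ ∞ := ENNReal.natCast_ne_top i
  have hkey := key_swap μ N V hN hV i hi (fun m => (m:ℝ)+1) (fun m => by positivity)
    (fun u => (i:ℝ) * u) (fun u hu => brw_hasSum1 hi hu)
  have hterm : ∀ m : ℕ, ptilt μ N V i (m+1)
      = (ENNReal.ofReal ((m:ℝ)+1) * Mbrw μ N V i (m + 1)) * (i:ℝ≥0∞)⁻¹ := by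
    intro m
    unfold ptilt
    rw [div_eq_mul_inv]
    congr 1
    rw [mul_comm]
    congr 1
    rw [← ENNReal.ofReal_natCast (m+1)]
    congr 1
    push_cast; ring
  calc ∑' m : ℕ, ptilt μ N V i (m + 1)
      = (∑' m : ℕ, ENNReal.ofReal ((m:ℝ)+1) * Mbrw μ N V i (m + 1)) * (i:ℝ≥0∞)⁻¹ := by
        rw [← ENNReal.tsum_mul_right]; exact tsum_congr hterm
    _ = (∫⁻ ω, ∑ k ∈ Finset.range (N ω), ENNReal.ofReal ((i:ℝ) * Real.exp (-V k ω)) ∂μ) * (i:ℝ≥0∞)⁻¹ := by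
        rw [hkey]
    _ = ((i:ℝ≥0∞) * ∫⁻ ω, ENNReal.ofReal (∑ k ∈ Finset.range (N ω), Real.exp (-V k ω)) ∂μ) * (i:ℝ≥0∞)⁻¹ := by
        congr 1
        have hω : ∀ ω, ∑ k ∈ Finset.range (N ω), ENNReal.ofReal ((i:ℝ) * Real.exp (-V k ω))
            = (i:ℝ≥0∞) * ENNReal.ofReal (∑ k ∈ Finset.range (N ω), Real.exp (-V k ω)) := by
          intro ω
          rw [ENNReal.ofReal_sum_of_nonneg (fun k _ => (Real.exp_pos (-V k ω)).le), Finset.mul_sum]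
          exact Finset.sum_congr rfl fun k _ => by
            rw [ENNReal.ofReal_mul (by positivity), ENNReal.ofReal_natCast]
        simp_rw [hω]
        rw [lintegral_const_mul _ (meas_ofReal_sum N hN (fun k ω => Real.exp (-V k ω)) (fun k => (hV k).neg.exp)
          (fun k ω => (Real.exp_pos _).le))]
    _ = 1 := by
        rw [psi1' μ N V hψ1, mul_one, ENNReal.mul_inv_cancel hiR hiT]

/-- F2: drift -/
lemma rowdrift (hN : Measurable N) (hV : ∀ k, Measurable (V k)) (hψ1 : psiFn μ N V 1 = 1) (i : ℕ) (hi : 1 ≤ i) :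
    ∑' m : ℕ, ((m:ℝ≥0∞) + 1) * ptilt μ N V i (m + 1)
      = 1 + ((i:ℝ≥0∞) + 1) * psiFn μ N V 2 := by
  have hiR : ((i:ℝ≥0∞)) ≠ 0 := by exact_mod_cast (by omega : i ≠ 0)
  have hiT : ((i:ℝ≥0∞)) ≠ ∞ := ENNReal.natCast_ne_top i
  have hkey := key_swap μ N V hN hV i hi (fun m => ((m:ℝ)+1)^2) (fun m => by positivity)
    (fun u => (i:ℝ) * (u + ((i:ℝ)+1) * u^2)) (fun u hu => brw_hasSum2 hi hu)
  have hterm : ∀ m : ℕ, ((m:ℝ≥0∞) + 1) * ptilt μ N V i (m+1)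
      = (ENNReal.ofReal (((m:ℝ)+1)^2) * Mbrw μ N V i (m + 1)) * (i:ℝ≥0∞)⁻¹ := by
    intro m
    unfold ptilt
    rw [div_eq_mul_inv, ← mul_assoc]
    congr 1
    rw [show ((m:ℝ≥0∞) + 1) * (Mbrw μ N V i (m+1) * ((m+1:ℕ):ℝ≥0∞))
        = (((m:ℝ≥0∞) + 1) * ((m+1:ℕ):ℝ≥0∞)) * Mbrw μ N V i (m+1) by ring]
    congr 1
    rw [← ENNReal.ofReal_natCast (m+1), ← ENNReal.ofReal_natCast m,
      ← ENNReal.ofReal_one, ← ENNReal.ofReal_add (by positivity) (by norm_num),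
      ← ENNReal.ofReal_mul (by positivity)]
    congr 1
    push_cast; ring
  calc ∑' m : ℕ, ((m:ℝ≥0∞) + 1) * ptilt μ N V i (m + 1)
      = (∑' m : ℕ, ENNReal.ofReal (((m:ℝ)+1)^2) * Mbrw μ N V i (m + 1)) * (i:ℝ≥0∞)⁻¹ := by
        rw [← ENNReal.tsum_mul_right]; exact tsum_congr hterm
    _ = (∫⁻ ω, ∑ k ∈ Finset.range (N ω),
          ENNReal.ofReal ((i:ℝ) * (Real.exp (-V k ω) + ((i:ℝ)+1) * Real.exp (-V k ω)^2)) ∂μ)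
            * (i:ℝ≥0∞)⁻¹ := by rw [hkey]
    _ = ((i:ℝ≥0∞) * (1 + ((i:ℝ≥0∞) + 1) * psiFn μ N V 2)) * (i:ℝ≥0∞)⁻¹ := by
        congr 1
        have hsplit : ∀ ω, (∑ k ∈ Finset.range (N ω),
            ENNReal.ofReal ((i:ℝ) * (Real.exp (-V k ω) + ((i:ℝ)+1) * Real.exp (-V k ω)^2)))
            = (i:ℝ≥0∞) * (ENNReal.ofReal (∑ k ∈ Finset.range (N ω), Real.exp (-V k ω))
              + ((i:ℝ≥0∞)+1) * ENNReal.ofReal (∑ k ∈ Finset.range (N ω), Real.exp (-V k ω)^2)) := by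
          intro ω
          rw [ENNReal.ofReal_sum_of_nonneg (fun k _ => by positivity),
            ENNReal.ofReal_sum_of_nonneg (fun k _ => by positivity),
            Finset.mul_sum, ← Finset.sum_add_distrib, Finset.mul_sum]
          apply Finset.sum_congr rfl
          intro k _
          rw [ENNReal.ofReal_mul (by positivity), ENNReal.ofReal_natCast,
            ENNReal.ofReal_add (by positivity) (by positivity),
            ENNReal.ofReal_mul (by positivity), ENNReal.ofReal_add (by positivity) (by norm_num),
            ENNReal.ofReal_natCast, ENNReal.ofReal_one]
        simp_rw [hsplit]
        rw [lintegral_const_mul _ ?hm1]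
        case hm1 =>
          apply Measurable.add (f := fun ω => ENNReal.ofReal (∑ k ∈ Finset.range (N ω), Real.exp (-V k ω)))
            (g := fun ω => ((i:ℝ≥0∞) + 1) * ENNReal.ofReal (∑ k ∈ Finset.range (N ω), Real.exp (-V k ω) ^ 2))
          · exact meas_ofReal_sum N hN _ (fun k => (hV k).neg.exp) (fun k ω => (Real.exp_pos _).le)
          · exact (meas_ofReal_sum N hN _ (fun k => ((hV k).neg.exp).pow_const 2)
              (fun k ω => by positivity)).const_mul _
        congr 1
        rw [lintegral_add_left (meas_ofReal_sum N hN (fun k ω => Real.exp (-V k ω)) (fun k => (hV k).neg.exp)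
          (fun k ω => (Real.exp_pos _).le)),
          lintegral_const_mul _ (meas_ofReal_sum N hN (fun k ω => Real.exp (-V k ω) ^ 2) (fun k => ((hV k).neg.exp).pow_const 2)
          (fun k ω => by positivity))]
        rw [psi1' μ N V hψ1, psi2' μ N V]
    _ = 1 + ((i:ℝ≥0∞) + 1) * psiFn μ N V 2 := by
        rw [mul_comm ((i:ℝ≥0∞)) _, mul_assoc, ENNReal.mul_inv_cancel hiR hiT, mul_one]

/-- F3: positivity of return probability -/
lemma pos_p1 (hN : Measurable N) (hV : ∀ k, Measurable (V k)) (hψ1 : psiFn μ N V 1 = 1) (i : ℕ) (hi : 1 ≤ i) : ptilt μ N V i 1 ≠ 0 := by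
  have hM : Mbrw μ N V i 1 ≠ 0 := by
    intro h0
    have hMeq := Mbrw_eq μ N V i 0
    rw [h0] at hMeq
    have hmeas := meas_ofReal_sum N hN (fun k ω => brwTerm i 0 (Real.exp (-V k ω)))
      (fun k => brwTerm_meas V i 0 k hV) (fun k ω => brwTerm_nonneg i 0 (Real.exp_pos _))
    have hae := (lintegral_eq_zero_iff hmeas).mp hMeq.symm
    have hae2 : (fun ω => ENNReal.ofReal (∑ k ∈ Finset.range (N ω), Real.exp (-V k ω)))
        =ᵐ[μ] 0 := by
      filter_upwards [hae] with ω hω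
      simp only [Pi.zero_apply, ENNReal.ofReal_eq_zero] at hω ⊢
      by_contra hc
      push_neg at hc
      have hNpos : 0 < N ω := by
        rcases Nat.eq_zero_or_pos (N ω) with h | h
        · rw [h] at hc; simp at hc
        · exact h
      have : 0 < ∑ k ∈ Finset.range (N ω), brwTerm i 0 (Real.exp (-V k ω)) :=
        Finset.sum_pos (fun k _ => brwTerm_pos hi (Real.exp_pos _))
          (Finset.nonempty_range_iff.mpr (by omega))
      linarith
    have h1 := psi1' μ N V hψ1
    rw [lintegral_congr_ae hae2] at h1
    simp at h1
  unfold ptilt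
  have hiT : ((i:ℝ≥0∞)) ≠ ∞ := ENNReal.natCast_ne_top i
  simp only [Nat.cast_one, mul_one, div_eq_mul_inv]
  exact mul_ne_zero hM (ENNReal.inv_ne_zero.mpr hiT)

end Layer3



noncomputable def brwPsi (P : ℕ → ℕ → ℝ≥0∞) : (n : ℕ) → ℕ → (Fin n → ℕ) → ℝ≥0∞
  | 0, _, _ => 1
  | n+1, i, c => ((if c 0 = 1 then 0 else 1) * P i (c 0)) * brwPsi P n (c 0) (fun k => c k.succ)

noncomputable def brwS (P : ℕ → ℕ → ℝ≥0∞) (n : ℕ) (i : ℕ) : ℝ≥0∞ :=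
  ∑' c : Fin n → ℕ, brwPsi P n i c

lemma brwS_zero (P : ℕ → ℕ → ℝ≥0∞) (i : ℕ) : brwS P 0 i = 1 := by
  unfold brwS
  haveI : Unique (Fin 0 → ℕ) := ⟨⟨fun k => k.elim0⟩, fun f => funext fun k => k.elim0⟩
  rw [tsum_eq_single default (fun b hb => absurd (Subsingleton.elim b default) hb)]
  rfl

lemma brwS_succ (P : ℕ → ℕ → ℝ≥0∞) (n i : ℕ) :
    brwS P (n+1) i = ∑' j : ℕ, ((if j = 1 then 0 else 1) * P i j) * brwS P n j := by
  unfold brwS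
  rw [← (Fin.consEquiv (fun _ => ℕ)).tsum_eq, ENNReal.tsum_prod']
  apply tsum_congr
  intro j
  rw [← ENNReal.tsum_mul_left]
  apply tsum_congr
  intro d
  show brwPsi P (n+1) i (Fin.cons j d) = _
  have h0 : (Fin.cons j d : Fin (n+1) → ℕ) 0 = j := Fin.cons_zero _ _
  have htail : (fun k : Fin n => (Fin.cons j d : Fin (n+1) → ℕ) k.succ) = d :=
    funext fun k => Fin.cons_succ _ _ _
  rw [show brwPsi P (n+1) i (Fin.cons j d)
      = ((if (Fin.cons j d : Fin (n+1) → ℕ) 0 = 1 then 0 else 1)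
          * P i ((Fin.cons j d : Fin (n+1) → ℕ) 0))
        * brwPsi P n ((Fin.cons j d : Fin (n+1) → ℕ) 0)
            (fun k => (Fin.cons j d : Fin (n+1) → ℕ) k.succ) from rfl]
  rw [h0, htail]

lemma brwS_bound (P : ℕ → ℕ → ℝ≥0∞) (h : ℕ → ℝ≥0∞) (L : ℝ≥0∞)
    (hP0 : ∀ i, P i 0 = 0)
    (hh1 : ∀ j, 1 ≤ h j)
    (hdrift : ∀ i, 2 ≤ i → ∑' j : ℕ, ((if j = 1 then 0 else 1) * P i j) * h j ≤ L * h i) :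
    ∀ n i, 2 ≤ i → brwS P n i ≤ L ^ n * h i := by
  intro n
  induction n with
  | zero =>
    intro i hi
    rw [brwS_zero]
    simpa using hh1 i
  | succ n IH =>
    intro i hi
    rw [brwS_succ]
    calc ∑' j : ℕ, ((if j = 1 then 0 else 1) * P i j) * brwS P n j
        ≤ ∑' j : ℕ, ((if j = 1 then 0 else 1) * P i j) * (L ^ n * h j) := by
          apply ENNReal.tsum_le_tsum
          intro j
          match j with
          | 0 => simp [hP0]
          | 1 => simp
          | (m+2) => exact mul_le_mul_right (IH (m+2) (by omega)) _
      _ = L ^ n * ∑' j : ℕ, ((if j = 1 then 0 else 1) * P i j) * h j := by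
          rw [← ENNReal.tsum_mul_left]
          exact tsum_congr fun j => by ring
      _ ≤ L ^ n * (L * h i) := mul_le_mul_right (hdrift i hi) _
      _ = L ^ (n+1) * h i := by rw [← mul_assoc, ← pow_succ]

lemma brwS_start (P : ℕ → ℕ → ℝ≥0∞) (h : ℕ → ℝ≥0∞) (L C₁ : ℝ≥0∞)
    (hP0 : ∀ i, P i 0 = 0)
    (hh1 : ∀ j, 1 ≤ h j)
    (hdrift : ∀ i, 2 ≤ i → ∑' j : ℕ, ((if j = 1 then 0 else 1) * P i j) * h j ≤ L * h i)
    (hdrift1 : ∑' j : ℕ, ((if j = 1 then 0 else 1) * P 1 j) * h j ≤ C₁) :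
    ∀ n, brwS P (n+1) 1 ≤ L ^ n * C₁ := by
  intro n
  rw [brwS_succ]
  calc ∑' j : ℕ, ((if j = 1 then 0 else 1) * P 1 j) * brwS P n j
      ≤ ∑' j : ℕ, ((if j = 1 then 0 else 1) * P 1 j) * (L ^ n * h j) := by
        apply ENNReal.tsum_le_tsum
        intro j
        match j with
        | 0 => simp [hP0]
        | 1 => simp
        | (m+2) => exact mul_le_mul_right (brwS_bound P h L hP0 hh1 hdrift n (m+2) (by omega)) _
    _ = L ^ n * ∑' j : ℕ, ((if j = 1 then 0 else 1) * P 1 j) * h j := by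
        rw [← ENNReal.tsum_mul_left]
        exact tsum_congr fun j => by ring
    _ ≤ L ^ n * C₁ := mul_le_mul_right hdrift1 _

/-- the path function: value `i` at `0`, `c (k-1)` for `1 ≤ k ≤ n`, junk `0` above. -/
def brwPath (i : ℕ) {n : ℕ} (c : Fin n → ℕ) : ℕ → ℕ :=
  fun k => if h : 1 ≤ k ∧ k ≤ n then c ⟨k-1, by omega⟩ else if k = 0 then i else 0

lemma brwPath_zero (i : ℕ) {n : ℕ} (c : Fin n → ℕ) : brwPath i c 0 = i := by
  simp [brwPath]

lemma brwPath_succ (i : ℕ) {n : ℕ} (c : Fin n → ℕ) (k : Fin n) :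
    brwPath i c ((k : ℕ) + 1) = c k := by
  have hk : (1 ≤ (k:ℕ) + 1 ∧ (k:ℕ) + 1 ≤ n) := ⟨by omega, by omega⟩
  rw [brwPath, dif_pos hk]
  exact congrArg c (Fin.ext (by simp))

lemma brwPath_shift (i : ℕ) {n : ℕ} (c : Fin (n+1) → ℕ) (k : ℕ) :
    brwPath i c (k + 1) = brwPath (c 0) (fun k : Fin n => c k.succ) k := by
  by_cases h1 : 1 ≤ k ∧ k ≤ n
  · rw [brwPath, dif_pos (⟨by omega, by omega⟩ : 1 ≤ k + 1 ∧ k + 1 ≤ n + 1),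
      brwPath, dif_pos h1]
    exact congrArg c (Fin.ext (by simp [Fin.val_succ]; omega))
  · rcases Nat.eq_zero_or_pos k with h0 | h0
    · subst h0
      rw [brwPath, dif_pos (⟨by omega, by omega⟩ : 1 ≤ 0 + 1 ∧ 0 + 1 ≤ n + 1),
        brwPath_zero]
      rfl
    · have hk : n < k := by omega
      rw [brwPath, dif_neg (by omega), if_neg (by omega), brwPath, dif_neg h1, if_neg (by omega)]

lemma brwProd_eq (P : ℕ → ℕ → ℝ≥0∞) : ∀ (n : ℕ) (i : ℕ) (c : Fin n → ℕ),
    (∏ k ∈ Finset.range n, ((if brwPath i c (k+1) = 1 then (0:ℝ≥0∞) else 1)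
        * P (brwPath i c k) (brwPath i c (k+1))))
      = brwPsi P n i c := by
  intro n
  induction n with
  | zero => intro i c; simp [brwPsi]
  | succ n IH =>
    intro i c
    rw [Finset.prod_range_succ']
    have hshift : ∀ k : ℕ, brwPath i c (k + 1) = brwPath (c 0) (fun k : Fin n => c k.succ) k :=
      brwPath_shift i c
    have hshiftprod : (∏ k ∈ Finset.range n, ((if brwPath i c (k+1+1) = 1 then (0:ℝ≥0∞) else 1)
        * P (brwPath i c (k+1)) (brwPath i c (k+1+1))))
        = brwPsi P n (c 0) (fun k : Fin n => c k.succ) := by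
      rw [← IH (c 0) (fun k : Fin n => c k.succ)]
      apply Finset.prod_congr rfl
      intro k _
      rw [hshift k, hshift (k+1)]
    rw [hshiftprod]
    have h1 : brwPath i c (0 + 1) = c 0 := by
      have := brwPath_succ i c (0 : Fin (n+1))
      simpa using this
    have h0 : brwPath i c 0 = i := brwPath_zero i c
    rw [h1, h0]
    show _ = ((if c 0 = 1 then (0:ℝ≥0∞) else 1) * P i (c 0)) * brwPsi P n (c 0) (fun k => c k.succ)
    ring



lemma brw_drift_real (s δ d H lam : ℝ) (K : ℕ) (i : ℕ)
    (hs0 : 0 ≤ s) (hs1 : s < 1) (hδpos : 0 < δ) (hδ1 : δ ≤ 1)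
    (hK4 : 4 ≤ (K:ℝ) * (1 - s)) (hK3 : 3 ≤ K)
    (hHδ : H * δ = 2 * ((K:ℝ) + 2)) (hH1 : 1 ≤ H)
    (hlam1 : 1 - δ/2 ≤ lam) (hlam2 : (s * (K:ℝ) + H + 1 + s) / ((K:ℝ) + H) ≤ lam)
    (hi : 2 ≤ i) (hd0 : 0 ≤ d) (hd1 : d ≤ 1)
    (hdδ : i < K → δ ≤ d) :
    H * (1 - d) + (1 + ((i:ℝ) + 1) * s) ≤ lam * (H + (i:ℝ)) := by
  have hK0 : (3:ℝ) ≤ (K:ℝ) := by exact_mod_cast hK3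
  have hi0 : (2:ℝ) ≤ (i:ℝ) := by exact_mod_cast hi
  have hKH : (0:ℝ) < (K:ℝ) + H := by linarith
  have h2 : s * (K:ℝ) + H + 1 + s ≤ lam * ((K:ℝ) + H) := by
    have := (div_le_iff₀ hKH).mp hlam2
    linarith
  by_cases hiK : i < K
  · have hiKr : (i:ℝ) + 1 ≤ (K:ℝ) := by exact_mod_cast hiK
    have hd : δ ≤ d := hdδ hiK
    have h1 : H * (1 - d) ≤ H * (1 - δ) := by nlinarith
    have h3 : ((i:ℝ) + 1) * s ≤ (K:ℝ) := by nlinarith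
    have h4 : (1 - δ/2) * (H + (i:ℝ)) ≤ lam * (H + (i:ℝ)) :=
      mul_le_mul_of_nonneg_right hlam1 (by linarith)
    nlinarith [h1, h3, h4, hHδ, mul_nonneg (by linarith : (0:ℝ) ≤ 1 - δ/2) (by linarith : (0:ℝ) ≤ (i:ℝ))]
  · have hiK' : (K:ℝ) ≤ (i:ℝ) := by exact_mod_cast le_of_not_gt hiK
    have hlam_s : s ≤ lam := by nlinarith [h2, hH1, hs1, hKH]
    nlinarith [h2, mul_nonneg (by linarith : (0:ℝ) ≤ lam - s) (by linarith : (0:ℝ) ≤ (i:ℝ) - (K:ℝ)),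
      mul_nonneg (by linarith : (0:ℝ) ≤ H) hd0]


/-- if `ψ(1) = 1` and `ψ(2) < 1`, then `p(i,j) = M(i,j)·j/i` is a
stochastic transition matrix on the positive integers (`Σ_{j≥1} p(i,j) = 1` for every
`i ≥ 1`), and for every Markov chain `(N_n)` with transition probabilities `p` started
at `N_0 = 1` (described through its cylinder distributions), the first return time
`γ = inf {n ≥ 1 : N_n = 1}` has an exponential moment: there is `r > 0` with
`E[exp(r·γ)] < ∞`. -/
theorem brw_chain_return_time_exponential_moment {Ω : Type*} [MeasurableSpace Ω]
    (μ : Measure Ω) [IsProbabilityMeasure μ] (N : Ω → ℕ) (V : ℕ → Ω → ℝ)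
    (hN : Measurable N) (hV : ∀ k, Measurable (V k))
    (hψ1 : psiFn μ N V 1 = 1) (hψ2 : psiFn μ N V 2 < 1) :
    (∀ i : ℕ+, ∑' j : ℕ+, ptilt μ N V (i : ℕ) (j : ℕ) = 1) ∧
      ∀ (μc : Measure (ℕ → ℕ)), IsProbabilityMeasure μc →
        (∀ (n : ℕ) (x : ℕ → ℕ),
          μc {ω | ∀ k ≤ n, ω k = x k} =
            (if x 0 = 1 then 1 else 0) *
              ∏ k ∈ Finset.range n, ptilt μ N V (x k) (x (k + 1))) →
        ∃ r : ℝ, 0 < r ∧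
          ∫⁻ ω, (if ∃ n : ℕ, 1 ≤ n ∧ ω n = 1
              then ENNReal.ofReal (Real.exp (r * (retTime ω : ℝ)))
              else ∞) ∂μc < ∞ := by
  set P : ℕ → ℕ → ℝ≥0∞ := ptilt μ N V with hPdef
  have hψ2top : psiFn μ N V 2 ≠ ∞ := (hψ2.trans ENNReal.one_lt_top).ne
  have hrow : ∀ i : ℕ, 1 ≤ i → ∑' m : ℕ, P i (m+1) = 1 := fun i hi => rowsum1 μ N V hN hV hψ1 i hi
  have hD : ∀ i : ℕ, 1 ≤ i → ∑' m : ℕ, ((m:ℝ≥0∞) + 1) * P i (m + 1)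
      = 1 + ((i:ℝ≥0∞) + 1) * psiFn μ N V 2 := fun i hi => rowdrift μ N V hN hV hψ1 i hi
  have hpos : ∀ i : ℕ, 1 ≤ i → P i 1 ≠ 0 := fun i hi => pos_p1 μ N V hN hV hψ1 i hi
  have hP0 : ∀ i, P i 0 = 0 := by
    intro i
    simp [hPdef, ptilt]
  have hple : ∀ i : ℕ, 1 ≤ i → P i 1 ≤ 1 := by
    intro i hi
    rw [← hrow i hi]
    exact ENNReal.le_tsum 0
  have hpfin : ∀ i : ℕ, 1 ≤ i → P i 1 ≠ ∞ := fun i hi => ((hple i hi).trans_lt ENNReal.one_lt_top).ne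
  -- part 1
  have part1 : ∀ i : ℕ+, ∑' j : ℕ+, ptilt μ N V (i : ℕ) (j : ℕ) = 1 := by
    intro i
    have hval : ∀ m : ℕ, ((Equiv.pnatEquivNat.symm m : ℕ+) : ℕ) = m + 1 := by
      intro m
      rfl
    rw [← Equiv.pnatEquivNat.symm.tsum_eq (fun j : ℕ+ => ptilt μ N V (i:ℕ) (j:ℕ))]
    calc ∑' m : ℕ, ptilt μ N V (i:ℕ) ((Equiv.pnatEquivNat.symm m : ℕ+) : ℕ)
        = ∑' m : ℕ, ptilt μ N V (i:ℕ) (m+1) := by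
          exact tsum_congr fun m => by rw [hval m]
      _ = 1 := hrow i i.2
  refine ⟨part1, ?_⟩
  intro μc hμc hcyl
  -- real constants
  set s : ℝ := (psiFn μ N V 2).toReal with hsdef
  have hs0 : 0 ≤ s := ENNReal.toReal_nonneg
  have hs1 : s < 1 := by
    have := (ENNReal.toReal_lt_toReal hψ2top ENNReal.one_ne_top).mpr hψ2
    simpa using this
  set K : ℕ := ⌈(4:ℝ)/(1-s)⌉₊ + 3 with hKdef
  have hK3 : 3 ≤ K := by omega
  have hK4 : 4 ≤ (K:ℝ) * (1 - s) := by
    have h1 : (4:ℝ)/(1-s) ≤ (⌈(4:ℝ)/(1-s)⌉₊ : ℝ) := Nat.le_ceil _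
    have h2 : (4:ℝ)/(1-s) ≤ (K:ℝ) := by
      rw [hKdef]
      push_cast
      linarith
    have h3 : (0:ℝ) < 1 - s := by linarith
    calc (4:ℝ) = (4/(1-s)) * (1-s) := by field_simp
      _ ≤ (K:ℝ) * (1-s) := by nlinarith
  -- δ
  have hIccne : (Finset.Icc 2 K).Nonempty := ⟨2, Finset.mem_Icc.mpr ⟨le_refl 2, by omega⟩⟩
  set δ : ℝ := min 1 ((Finset.Icc 2 K).inf' hIccne (fun i => (P i 1).toReal)) with hδdef
  have hδpos : 0 < δ := by
    rw [hδdef]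
    apply lt_min one_pos
    rw [Finset.lt_inf'_iff]
    intro i hi
    have h2 : 1 ≤ i := by
      have := (Finset.mem_Icc.mp hi).1
      omega
    exact ENNReal.toReal_pos (hpos i h2) (hpfin i h2)
  have hδ1 : δ ≤ 1 := min_le_left _ _
  have hδle : ∀ i : ℕ, 2 ≤ i → i ≤ K → δ ≤ (P i 1).toReal := by
    intro i h2 hK
    exact (min_le_right _ _).trans (Finset.inf'_le _ (Finset.mem_Icc.mpr ⟨h2, hK⟩))
  set H : ℝ := 2 * ((K:ℝ) + 2) / δ with hHdef
  have hHδ : H * δ = 2 * ((K:ℝ) + 2) := by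
    rw [hHdef]
    field_simp
  have hH1 : 1 ≤ H := by
    rw [hHdef]
    rw [le_div_iff₀ hδpos]
    have : (3:ℝ) ≤ (K:ℝ) := by exact_mod_cast hK3
    nlinarith
  have hH0 : 0 ≤ H := by linarith
  set lam : ℝ := max (1 - δ/2) ((s * (K:ℝ) + H + 1 + s)/((K:ℝ) + H)) with hlamdef
  have hKr : (3:ℝ) ≤ (K:ℝ) := by exact_mod_cast hK3
  have hlam_lt1 : lam < 1 := by
    rw [hlamdef]
    apply max_lt (by linarith)
    rw [div_lt_one (by linarith)]
    nlinarith
  have hlam1 : 1 - δ/2 ≤ lam := le_max_left _ _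
  have hlam2 : (s * (K:ℝ) + H + 1 + s)/((K:ℝ) + H) ≤ lam := le_max_right _ _
  have hlam_half : (1:ℝ)/2 ≤ lam := by
    refine le_trans ?_ hlam1
    linarith
  have hlam_pos : 0 < lam := by linarith
  -- ENNReal constants
  set L : ℝ≥0∞ := ENNReal.ofReal lam with hLdef
  set h : ℕ → ℝ≥0∞ := fun j => ENNReal.ofReal H + (j : ℝ≥0∞) with hhdef
  have hh1 : ∀ j, 1 ≤ h j := by
    intro j
    rw [hhdef]
    exact le_trans (ENNReal.one_le_ofReal.mpr hH1) le_self_add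
  have hhfin : ∀ j, h j ≠ ∞ := by
    intro j
    rw [hhdef]
    exact (ENNReal.add_lt_top.mpr ⟨ENNReal.ofReal_lt_top, ENNReal.natCast_lt_top j⟩).ne
  -- reindexing helper
  have hreindex : ∀ (f : ℕ → ℝ≥0∞), f 0 = 0 → ∑' j : ℕ, f j = ∑' m : ℕ, f (m+1) := by
    intro f hf0
    refine (Function.Injective.tsum_eq (g := fun m : ℕ => m + 1)
      (fun a b hab => by simpa using hab) ?_).symm
    rw [Function.support_subset_iff']
    intro x hx
    rcases Nat.eq_zero_or_pos x with rfl | hxpos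
    · exact hf0
    · exact absurd ⟨x - 1, by simp; omega⟩ hx
  -- the T bound
  have hT : ∀ i : ℕ, 1 ≤ i → ∑' j : ℕ, ((if j = 1 then 0 else 1) * P i j) * h j
      ≤ ENNReal.ofReal H * (1 - P i 1) + (1 + ((i:ℝ≥0∞) + 1) * psiFn μ N V 2) := by
    intro i hi
    rw [hreindex _ (by simp [hP0 i])]
    have hsplit : ∀ m : ℕ, ((if m + 1 = 1 then (0:ℝ≥0∞) else 1) * P i (m+1)) * h (m+1)
        = ENNReal.ofReal H * ((if m = 0 then (0:ℝ≥0∞) else 1) * P i (m+1))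
          + ((if m = 0 then (0:ℝ≥0∞) else 1) * P i (m+1)) * (((m+1 : ℕ)):ℝ≥0∞) := by
      intro m
      rcases Nat.eq_zero_or_pos m with rfl | hm
      · simp
      · rw [if_neg (by omega), if_neg (by omega), hhdef]
        push_cast
        ring
    rw [tsum_congr hsplit, ENNReal.tsum_add]
    apply add_le_add
    · rw [ENNReal.tsum_mul_left]
      apply mul_le_mul_right
      have heqit : ∑' m : ℕ, (if m = 0 then (0:ℝ≥0∞) else 1) * P i (m+1)
          = ∑' m : ℕ, if m = 0 then (0:ℝ≥0∞) else P i (m+1) :=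
        tsum_congr fun m => by split <;> simp
      rw [heqit]
      have hiter : P i 1 + (∑' m : ℕ, if m = 0 then (0:ℝ≥0∞) else P i (m+1)) = 1 := by
        calc P i 1 + (∑' m : ℕ, if m = 0 then (0:ℝ≥0∞) else P i (m+1))
            = (∑' m : ℕ, if m = 0 then P i 1 else (0:ℝ≥0∞))
              + (∑' m : ℕ, if m = 0 then (0:ℝ≥0∞) else P i (m+1)) := by
              rw [tsum_ite_eq]
          _ = ∑' m : ℕ, ((if m = 0 then P i 1 else (0:ℝ≥0∞))
              + (if m = 0 then (0:ℝ≥0∞) else P i (m+1))) := ENNReal.tsum_add.symm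
          _ = ∑' m : ℕ, P i (m+1) := by
              apply tsum_congr
              intro m
              rcases Nat.eq_zero_or_pos m with rfl | hm
              · simp
              · rw [if_neg (by omega), if_neg (by omega), zero_add]
          _ = 1 := hrow i hi
      have hiter' : (∑' m : ℕ, if m = 0 then (0:ℝ≥0∞) else P i (m+1)) + P i 1 = 1 := by
        rw [add_comm]; exact hiter
      exact (ENNReal.eq_sub_of_add_eq (hpfin i hi) hiter').le
    · rw [← hD i hi]
      apply ENNReal.tsum_le_tsum
      intro m
      have hcast : (((m+1 : ℕ)):ℝ≥0∞) = (m:ℝ≥0∞) + 1 := by push_cast; rfl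
      rw [hcast]
      calc ((if m = 0 then (0:ℝ≥0∞) else 1) * P i (m+1)) * ((m:ℝ≥0∞) + 1)
          ≤ (1 * P i (m+1)) * ((m:ℝ≥0∞) + 1) := by
            gcongr
            split <;> simp
        _ = ((m:ℝ≥0∞) + 1) * P i (m+1) := by ring
  -- ENNReal drift
  have hRHS : ∀ i : ℕ, 1 ≤ i →
      ENNReal.ofReal H * (1 - P i 1) + (1 + ((i:ℝ≥0∞) + 1) * psiFn μ N V 2)
        = ENNReal.ofReal (H * (1 - (P i 1).toReal) + (1 + ((i:ℝ) + 1) * s)) := by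
    intro i hi
    have hd0 : 0 ≤ (P i 1).toReal := ENNReal.toReal_nonneg
    have hd1 : (P i 1).toReal ≤ 1 := by
      rw [← ENNReal.toReal_one]
      exact ENNReal.toReal_mono ENNReal.one_ne_top (hple i hi)
    rw [ENNReal.ofReal_add (by nlinarith) (by positivity)]
    congr 1
    · rw [ENNReal.ofReal_mul hH0]
      congr 1
      rw [ENNReal.ofReal_sub _ hd0, ENNReal.ofReal_one, ENNReal.ofReal_toReal (hpfin i hi)]
    · rw [ENNReal.ofReal_add (by norm_num) (by positivity), ENNReal.ofReal_one]
      congr 1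
      rw [ENNReal.ofReal_mul (by positivity)]
      congr 1
      · rw [ENNReal.ofReal_add (by positivity) (by norm_num), ENNReal.ofReal_one,
          ENNReal.ofReal_natCast]
      · rw [hsdef, ENNReal.ofReal_toReal hψ2top]
  have hdrift : ∀ i : ℕ, 2 ≤ i →
      ∑' j : ℕ, ((if j = 1 then 0 else 1) * P i j) * h j ≤ L * h i := by
    intro i hi2
    refine (hT i (by omega)).trans ?_
    rw [hRHS i (by omega)]
    have hgoal : L * h i = ENNReal.ofReal (lam * (H + (i:ℝ))) := by
      rw [hLdef, hhdef, ENNReal.ofReal_mul hlam_pos.le]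
      congr 1
      rw [ENNReal.ofReal_add hH0 (by positivity), ENNReal.ofReal_natCast]
    rw [hgoal]
    apply ENNReal.ofReal_le_ofReal
    have hd1 : (P i 1).toReal ≤ 1 := by
      rw [← ENNReal.toReal_one]
      exact ENNReal.toReal_mono ENNReal.one_ne_top (hple i (by omega))
    exact brw_drift_real s δ ((P i 1).toReal) H lam K i hs0 hs1 hδpos hδ1 hK4 hK3 hHδ hH1
      hlam1 hlam2 hi2 ENNReal.toReal_nonneg hd1 (fun hiK => hδle i hi2 (by omega))
  set C₁ : ℝ≥0∞ := ENNReal.ofReal H + 3 with hC₁def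
  have hC₁fin : C₁ ≠ ∞ := by
    rw [hC₁def]
    exact (ENNReal.add_lt_top.mpr ⟨ENNReal.ofReal_lt_top, by norm_num⟩).ne
  have hdrift1 : ∑' j : ℕ, ((if j = 1 then 0 else 1) * P 1 j) * h j ≤ C₁ := by
    refine (hT 1 le_rfl).trans ?_
    rw [hC₁def]
    apply add_le_add
    · exact (mul_le_mul_right tsub_le_self _).trans (le_of_eq (mul_one _))
    · have hψle : psiFn μ N V 2 ≤ 1 := hψ2.le
      have h3 : (1 : ℝ≥0∞) + (((1:ℕ):ℝ≥0∞) + 1) * psiFn μ N V 2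
          ≤ 1 + (((1:ℕ):ℝ≥0∞) + 1) * 1 := by gcongr
      refine h3.trans (le_of_eq ?_)
      norm_num
  -- μc gives no mass to ω 0 ≠ 1
  have hzero : μc {ω : ℕ → ℕ | ω 0 ≠ 1} = 0 := by
    have hsingle : ∀ m : ℕ, m ≠ 1 → μc {ω : ℕ → ℕ | ω 0 = m} = 0 := by
      intro m hm
      have hc := hcyl 0 (fun _ => m)
      simp only [Finset.range_zero, Finset.prod_empty, mul_one, if_neg hm] at hc
      have hset : {ω : ℕ → ℕ | ∀ k ≤ 0, ω k = m} = {ω : ℕ → ℕ | ω 0 = m} := by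
        ext ω
        simp [Nat.le_zero]
      rw [hset] at hc
      exact hc
    have hsub : {ω : ℕ → ℕ | ω 0 ≠ 1} ⊆ ⋃ m : {m : ℕ // m ≠ 1}, {ω : ℕ → ℕ | ω 0 = m.val} := by
      intro ω hω
      exact Set.mem_iUnion.mpr ⟨⟨ω 0, hω⟩, rfl⟩
    refine le_antisymm ?_ zero_le
    refine (measure_mono hsub).trans ?_
    refine (measure_iUnion_le _).trans ?_
    have : ∀ m : {m : ℕ // m ≠ 1}, μc {ω : ℕ → ℕ | ω 0 = m.val} = 0 :=
      fun m => hsingle m.val m.2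
    simp [this]
  -- the taboo-probability bound
  have hBset : ∀ n : ℕ, μc {ω : ℕ → ℕ | ∀ k, 1 ≤ k → k ≤ n → ω k ≠ 1} ≤ brwS P n 1 := by
    intro n
    have hsub : {ω : ℕ → ℕ | ∀ k, 1 ≤ k → k ≤ n → ω k ≠ 1}
        ⊆ {ω : ℕ → ℕ | ω 0 ≠ 1} ∪
          ⋃ c : {c : Fin n → ℕ // ∀ k, c k ≠ 1},
            {ω : ℕ → ℕ | ∀ k ≤ n, ω k = brwPath 1 c.val k} := by
      intro ω hω
      by_cases h0 : ω 0 = 1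
      · right
        refine Set.mem_iUnion.mpr ⟨⟨fun k => ω ((k:ℕ)+1),
          fun k => hω ((k:ℕ)+1) (by omega) (by omega)⟩, ?_⟩
        intro k hk
        rcases Nat.eq_zero_or_pos k with rfl | hpos
        · rw [brwPath_zero]; exact h0
        · obtain ⟨k', rfl⟩ : ∃ k', k = k' + 1 := ⟨k-1, by omega⟩
          have hk' : k' < n := by omega
          have hval := brwPath_succ 1 (fun k : Fin n => ω ((k:ℕ)+1)) ⟨k', hk'⟩
          simp only at hval
          rw [hval]
      · left; exact h0
    refine (measure_mono hsub).trans ?_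
    refine (measure_union_le _ _).trans ?_
    rw [hzero, zero_add]
    refine (measure_iUnion_le _).trans ?_
    have hval : ∀ c : {c : Fin n → ℕ // ∀ k, c k ≠ 1},
        μc {ω : ℕ → ℕ | ∀ k ≤ n, ω k = brwPath 1 c.val k} = brwPsi P n 1 c.val := by
      intro c
      rw [hcyl n (brwPath 1 c.val), brwPath_zero, if_pos rfl, one_mul,
        ← brwProd_eq P n 1 c.val]
      apply Finset.prod_congr rfl
      intro k hk
      have hkn : k < n := Finset.mem_range.mp hk
      have hscc : brwPath 1 c.val (k+1) = c.val ⟨k, hkn⟩ := by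
        have := brwPath_succ 1 c.val ⟨k, hkn⟩
        simpa using this
      rw [hscc, if_neg (c.2 ⟨k, hkn⟩), one_mul]
    calc ∑' c : {c : Fin n → ℕ // ∀ k, c k ≠ 1},
          μc {ω : ℕ → ℕ | ∀ k ≤ n, ω k = brwPath 1 c.val k}
        = ∑' c : {c : Fin n → ℕ // ∀ k, c k ≠ 1}, brwPsi P n 1 c.val := tsum_congr hval
      _ = ∑' c : ↑{c : Fin n → ℕ | ∀ k, c k ≠ 1}, brwPsi P n 1 c.val := rfl
      _ = ∑' c : Fin n → ℕ, Set.indicator {c : Fin n → ℕ | ∀ k, c k ≠ 1} (brwPsi P n 1) c :=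
          tsum_subtype _ _
      _ ≤ ∑' c : Fin n → ℕ, brwPsi P n 1 c :=
          ENNReal.tsum_le_tsum fun c => Set.indicator_le_self _ _ c
      _ = brwS P n 1 := rfl
  have hBgeom : ∀ n : ℕ, μc {ω : ℕ → ℕ | ∀ k, 1 ≤ k → k ≤ n + 1 → ω k ≠ 1} ≤ L ^ n * C₁ :=
    fun n => (hBset (n+1)).trans (brwS_start P h L C₁ hP0 hh1 hdrift hdrift1 n)
  -- choose r
  refine ⟨-(Real.log lam)/2, ?_, ?_⟩
  · have : Real.log lam < 0 := Real.log_neg hlam_pos hlam_lt1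
    linarith
  set r : ℝ := -(Real.log lam)/2 with hrdef
  have hr0 : 0 < r := by
    have : Real.log lam < 0 := Real.log_neg hlam_pos hlam_lt1
    rw [hrdef]; linarith
  have hrlam : Real.exp r * lam < 1 := by
    have he : Real.exp r * lam = Real.exp (r + Real.log lam) := by
      rw [Real.exp_add, Real.exp_log hlam_pos]
    rw [he, hrdef]
    calc Real.exp (-(Real.log lam)/2 + Real.log lam) = Real.exp ((Real.log lam)/2) := by
          congr 1; ring
      _ < Real.exp 0 := Real.exp_lt_exp.mpr (by
          have : Real.log lam < 0 := Real.log_neg hlam_pos hlam_lt1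
          linarith)
      _ = 1 := Real.exp_zero
  -- events
  set Ex : Set (ℕ → ℕ) := {ω : ℕ → ℕ | ∃ n : ℕ, 1 ≤ n ∧ ω n = 1} with hExdef
  have hcoord : ∀ n : ℕ, MeasurableSet {ω : ℕ → ℕ | ω n = 1} :=
    fun n => (measurable_pi_apply n) (measurableSet_singleton 1)
  have hExmeas : MeasurableSet Ex := by
    rw [hExdef]
    have : {ω : ℕ → ℕ | ∃ n : ℕ, 1 ≤ n ∧ ω n = 1}
        = ⋃ n : ℕ, ⋃ (_ : 1 ≤ n), {ω : ℕ → ℕ | ω n = 1} := by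
      ext ω; simp
    rw [this]
    exact MeasurableSet.iUnion fun n => MeasurableSet.iUnion fun _ => hcoord n
  set Sn : ℕ → Set (ℕ → ℕ) :=
    fun n => {ω : ℕ → ℕ | 1 ≤ n ∧ ω n = 1 ∧ ∀ m, 1 ≤ m → m < n → ω m ≠ 1} with hSndef
  have hSnmeas : ∀ n, MeasurableSet (Sn n) := by
    intro n
    have hSn_eq : Sn n
        = {ω : ℕ → ℕ | 1 ≤ n} ∩ ({ω : ℕ → ℕ | ω n = 1} ∩
            ⋂ m : ℕ, ⋂ (_ : 1 ≤ m), ⋂ (_ : m < n), {ω : ℕ → ℕ | ω m = 1}ᶜ) := by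
      ext ω
      simp only [hSndef, Set.mem_setOf_eq, Set.mem_inter_iff, Set.mem_iInter,
        Set.mem_compl_iff]
    rw [hSn_eq]
    refine (MeasurableSet.const _).inter ((hcoord n).inter ?_)
    exact MeasurableSet.iInter fun m => MeasurableSet.iInter fun _ =>
      MeasurableSet.iInter fun _ => (hcoord m).compl
  -- pointwise bound
  have hptw : ∀ ω : ℕ → ℕ,
      (if ∃ n : ℕ, 1 ≤ n ∧ ω n = 1
        then ENNReal.ofReal (Real.exp (r * (retTime ω : ℝ))) else ∞)
      ≤ (∑' n : ℕ, (Sn n).indicator (fun _ => ENNReal.ofReal (Real.exp (r * (n:ℝ)))) ω)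
        + (Exᶜ).indicator (fun _ => (∞:ℝ≥0∞)) ω := by
    intro ω
    by_cases hEx : ∃ n : ℕ, 1 ≤ n ∧ ω n = 1
    · rw [if_pos hEx]
      have hne : {n : ℕ | 1 ≤ n ∧ ω n = 1}.Nonempty := hEx
      have hmem : ω ∈ Sn (retTime ω) := by
        have h1 := Nat.sInf_mem hne
        refine ⟨h1.1, h1.2, ?_⟩
        intro m h1m hmn hm1
        exact (Nat.notMem_of_lt_sInf hmn) ⟨h1m, hm1⟩
      calc ENNReal.ofReal (Real.exp (r * (retTime ω : ℝ)))
          = (Sn (retTime ω)).indicator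
              (fun _ => ENNReal.ofReal (Real.exp (r * ((retTime ω : ℕ):ℝ)))) ω :=
            (Set.indicator_of_mem hmem
              (fun _ => ENNReal.ofReal (Real.exp (r * ((retTime ω : ℕ):ℝ))))).symm
        _ ≤ ∑' n : ℕ, (Sn n).indicator (fun _ => ENNReal.ofReal (Real.exp (r * (n:ℝ)))) ω :=
            ENNReal.le_tsum (retTime ω)
        _ ≤ _ := le_self_add
    · rw [if_neg hEx]
      have hmem : ω ∈ Exᶜ := hEx
      calc (∞:ℝ≥0∞) = (Exᶜ).indicator (fun _ => (∞:ℝ≥0∞)) ω :=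
            (Set.indicator_of_mem hmem (fun _ => (∞:ℝ≥0∞))).symm
        _ ≤ _ := le_add_self
  -- integrate the bound
  have hint : (∫⁻ ω, (if ∃ n : ℕ, 1 ≤ n ∧ ω n = 1
        then ENNReal.ofReal (Real.exp (r * (retTime ω : ℝ))) else ∞) ∂μc)
      ≤ (∑' n : ℕ, ENNReal.ofReal (Real.exp (r * (n:ℝ))) * μc (Sn n)) + ∞ * μc Exᶜ := by
    refine (lintegral_mono hptw).trans ?_
    rw [lintegral_add_left (Measurable.ennreal_tsum fun n =>
      measurable_const.indicator (hSnmeas n))]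
    apply add_le_add
    · rw [lintegral_tsum (fun n => (measurable_const.indicator (hSnmeas n)).aemeasurable)]
      apply ENNReal.tsum_le_tsum
      intro n
      rw [lintegral_indicator_const (hSnmeas n)]
    · rw [lintegral_indicator_const hExmeas.compl]
  -- μc Exᶜ = 0
  have hLlt : L < 1 := by
    rw [hLdef]
    exact ENNReal.ofReal_lt_one.mpr hlam_lt1
  have hExc : μc Exᶜ = 0 := by
    have hsub : ∀ n : ℕ, Exᶜ ⊆ {ω : ℕ → ℕ | ∀ k, 1 ≤ k → k ≤ n + 1 → ω k ≠ 1} := by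
      intro n ω hω k h1 h2 hk1
      exact hω ⟨k, h1, hk1⟩
    have hle : ∀ n : ℕ, μc Exᶜ ≤ L ^ n * C₁ :=
      fun n => (measure_mono (hsub n)).trans (hBgeom n)
    have htend : Filter.Tendsto (fun n : ℕ => L ^ n * C₁) Filter.atTop (nhds 0) := by
      have h1 := ENNReal.tendsto_pow_atTop_nhds_zero_of_lt_one hLlt
      have h2 := ENNReal.Tendsto.mul_const (b := C₁) h1 (Or.inr hC₁fin)
      simpa using h2
    exact le_antisymm (ge_of_tendsto' htend hle) zero_le
  -- uniform geometric bound on μc (Sn n)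
  have hLhalf : ENNReal.ofReal (1/2 : ℝ) ≤ L := by
    rw [hLdef]
    exact ENNReal.ofReal_le_ofReal hlam_half
  set C₂ : ℝ≥0∞ := (C₁ + 1) * 4 with hC₂def
  have hC₂fin : C₂ ≠ ∞ := by
    rw [hC₂def]
    exact (ENNReal.mul_lt_top (ENNReal.add_lt_top.mpr ⟨hC₁fin.lt_top, ENNReal.one_lt_top⟩)
      (by norm_num)).ne
  have hhalf_pow : ∀ k : ℕ, (1:ℝ≥0∞) ≤ 2^k * L^k := by
    intro k
    have : (1:ℝ≥0∞) = 2^k * (ENNReal.ofReal (1/2:ℝ))^k := by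
      rw [← mul_pow]
      rw [show ((2:ℝ≥0∞) * ENNReal.ofReal (1/2:ℝ)) = 1 by
        rw [show (2:ℝ≥0∞) = ENNReal.ofReal (2:ℝ) by simp]
        rw [← ENNReal.ofReal_mul (by norm_num)]
        norm_num]
      simp
    rw [this]
    exact mul_le_mul_right (pow_le_pow_left' hLhalf k) _
  have hSnbound : ∀ n : ℕ, μc (Sn n) ≤ C₂ * L ^ n := by
    intro n
    match n with
    | 0 =>
      have : Sn 0 = ∅ := by
        rw [hSndef]
        ext ω
        simp
      rw [this]
      simp
    | 1 =>
      calc μc (Sn 1) ≤ 1 := prob_le_one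
        _ ≤ C₂ * L ^ 1 := by
          rw [hC₂def]
          calc (1:ℝ≥0∞) ≤ 2 * L := by
                have := hhalf_pow 1
                simpa using this
            _ ≤ ((C₁ + 1) * 2) * L := by
                apply mul_le_mul_left
                calc (2:ℝ≥0∞) = 1 * 2 := (one_mul _).symm
                  _ ≤ (C₁ + 1) * 2 := mul_le_mul_left le_add_self _
            _ ≤ ((C₁ + 1) * 4) * L ^ 1 := by
                rw [pow_one]
                apply mul_le_mul_left
                apply mul_le_mul_right
                norm_num
    | (m+2) =>
      have hsub : Sn (m+2) ⊆ {ω : ℕ → ℕ | ∀ k, 1 ≤ k → k ≤ m + 1 → ω k ≠ 1} := by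
        intro ω hω k h1 h2
        exact hω.2.2 k h1 (by omega)
      calc μc (Sn (m+2)) ≤ L ^ m * C₁ := (measure_mono hsub).trans (hBgeom m)
        _ ≤ C₂ * L ^ (m+2) := by
          rw [hC₂def]
          calc L ^ m * C₁ = C₁ * L ^ m := mul_comm _ _
            _ = C₁ * (1 * L ^ m) := by rw [one_mul]
            _ ≤ C₁ * ((2^2 * L^2) * L ^ m) := by
                apply mul_le_mul_right
                exact mul_le_mul_left (hhalf_pow 2) _
            _ = (C₁ * 4) * L ^ (m+2) := by
                rw [show ((2:ℝ≥0∞)^2) = 4 by norm_num]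
                rw [mul_assoc, ← pow_add]
                ring_nf
            _ ≤ ((C₁ + 1) * 4) * L ^ (m+2) := by
                apply mul_le_mul_left
                exact mul_le_mul_left le_self_add _
  -- final computation
  set ρ : ℝ≥0∞ := ENNReal.ofReal (Real.exp r) * L with hρdef
  have hρlt : ρ < 1 := by
    rw [hρdef, hLdef, ← ENNReal.ofReal_mul (Real.exp_pos r).le]
    exact ENNReal.ofReal_lt_one.mpr hrlam
  calc (∫⁻ ω, (if ∃ n : ℕ, 1 ≤ n ∧ ω n = 1
        then ENNReal.ofReal (Real.exp (r * (retTime ω : ℝ))) else ∞) ∂μc)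
      ≤ (∑' n : ℕ, ENNReal.ofReal (Real.exp (r * (n:ℝ))) * μc (Sn n)) + ∞ * μc Exᶜ := hint
    _ = ∑' n : ℕ, ENNReal.ofReal (Real.exp (r * (n:ℝ))) * μc (Sn n) := by
        rw [hExc, mul_zero, add_zero]
    _ ≤ ∑' n : ℕ, ENNReal.ofReal (Real.exp r) ^ n * (C₂ * L ^ n) := by
        apply ENNReal.tsum_le_tsum
        intro n
        have he : ENNReal.ofReal (Real.exp (r * (n:ℝ))) = ENNReal.ofReal (Real.exp r) ^ n := by
          rw [show r * (n:ℝ) = (n:ℝ) * r by ring, Real.exp_nat_mul,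
            ENNReal.ofReal_pow (Real.exp_pos r).le]
        rw [he]
        exact mul_le_mul_right (hSnbound n) _
    _ = C₂ * ∑' n : ℕ, ρ ^ n := by
        rw [← ENNReal.tsum_mul_left]
        apply tsum_congr
        intro n
        rw [hρdef, mul_pow]
        ring
    _ = C₂ * (1 - ρ)⁻¹ := by rw [ENNReal.tsum_geometric]
    _ < ∞ := by
        apply ENNReal.mul_lt_top hC₂fin.lt_top
        rw [ENNReal.inv_lt_top]
        exact tsub_pos_of_lt hρlt
end

section
/- Assume ψ(1) = 1 and let (X_ℓ)_{ℓ≥1} be i.i.d. real random variables, independent of (N,(V_k)), whose common law ν is determined by E[f(X_1)] = E[Σ_{k=1}^{N} f(V_k)·e^{-V_k}] for bounded measurable f (a probability law since ψ(1) = 1). Set W := Σ_{ℓ≥1} exp(-(X_1 + ⋯ + X_ℓ)) and assume W < ∞ almost surely. Define a(i) := E[W^{i-1}/(1+W)^{i+1}] / E[1/(1+W)] for positive integers i. Then (a(i))_{i≥1} is a left eigenvector of the mean matrix M for the eigenvalue 1: for every positive integer j, Σ_{i≥1} a(i)·M(i,j) = a(j); moreover Σ_{i≥1} a(i) = 1.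 -/
open MeasureTheory ProbabilityTheory
open scoped ENNReal Classical

/-- `W = Σ_{ℓ≥1} exp(-(X_1 + ⋯ + X_ℓ))` built from the sequence `(X_ℓ)_{ℓ≥1}`
(indexed here from `0`, so `X 0 = X_1`, and `Finset.range (ℓ+1)` sums `X_1,…,X_{ℓ+1}`). -/
noncomputable def Wfn {Ω' : Type*} (X : ℕ → Ω' → ℝ) (ω' : Ω') : ℝ :=
  ∑' ℓ : ℕ, Real.exp (-(∑ k ∈ Finset.range (ℓ + 1), X k ω'))

/-- `a(i) = E[W^{i-1}/(1+W)^{i+1}] / E[1/(1+W)]`. -/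
noncomputable def aCoef {Ω' : Type*} [MeasurableSpace Ω'] (μ' : Measure Ω')
    (X : ℕ → Ω' → ℝ) (i : ℕ) : ℝ :=
  (∫ ω', Wfn X ω' ^ (i - 1) / (1 + Wfn X ω') ^ (i + 1) ∂μ') /
    ∫ ω', 1 / (1 + Wfn X ω') ∂μ'


lemma tsum_eq_toReal_tsum_ofReal {f : ℕ → ℝ} (hf : ∀ n, 0 ≤ f n) :
    ∑' n, f n = (∑' n, ENNReal.ofReal (f n)).toReal := by
  by_cases hs : Summable f
  · rw [← ENNReal.ofReal_tsum_of_nonneg hf hs, ENNReal.toReal_ofReal (tsum_nonneg hf)]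
  · rw [tsum_eq_zero_of_not_summable hs]
    have : ∑' n, ENNReal.ofReal (f n) = ∞ := by
      by_contra h
      have h2 := ENNReal.summable_toReal h
      apply hs
      convert h2 using 2 with n
      rw [ENNReal.toReal_ofReal (hf n)]
    rw [this, ENNReal.toReal_top]

/-- auxiliary: `Wfn` as a function of the sequence. -/
noncomputable def Gfn (u : ℕ → ℝ) : ℝ :=
  ∑' ℓ : ℕ, Real.exp (-(∑ k ∈ Finset.range (ℓ + 1), u k))

lemma wfn_eq_gfn {Ω' : Type*} (X : ℕ → Ω' → ℝ) (ω' : Ω') :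
    Wfn X ω' = Gfn (fun ℓ => X ℓ ω') := rfl

lemma measurable_gfn : Measurable Gfn := by
  have : Gfn = fun u => (∑' ℓ : ℕ,
      ENNReal.ofReal (Real.exp (-(∑ k ∈ Finset.range (ℓ + 1), u k)))).toReal := by
    funext u
    exact tsum_eq_toReal_tsum_ofReal (fun n => (Real.exp_pos _).le)
  rw [this]
  apply Measurable.ennreal_toReal
  apply Measurable.ennreal_tsum
  intro ℓ
  apply Measurable.ennreal_ofReal
  apply Measurable.exp
  apply Measurable.neg
  exact Finset.measurable_sum _ (fun k _ => measurable_pi_apply k)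

lemma measurable_wfn {Ω' : Type*} [MeasurableSpace Ω'] {X : ℕ → Ω' → ℝ}
    (hX : ∀ ℓ, Measurable (X ℓ)) : Measurable (Wfn X) := by
  have : Wfn X = fun ω' => Gfn (fun ℓ => X ℓ ω') := rfl
  rw [this]
  exact measurable_gfn.comp (measurable_pi_lambda _ (fun ℓ => hX ℓ))

lemma wfn_nonneg {Ω' : Type*} (X : ℕ → Ω' → ℝ) (ω' : Ω') : 0 ≤ Wfn X ω' :=
  tsum_nonneg (fun n => (Real.exp_pos _).le)

/-- `h_i(w) = w^(i-1)/(1+w)^(i+1)`. -/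
noncomputable def hfun (i : ℕ) (w : ℝ) : ℝ := w ^ (i - 1) / (1 + w) ^ (i + 1)

/-- `g_{ij}(x) = C(i+j-1,j) e^{-(j-1)x}/(1+e^{-x})^(i+j)`. -/
noncomputable def gfun (i j : ℕ) (x : ℝ) : ℝ :=
  ((i + j - 1).choose j : ℝ) * Real.exp (-x) ^ (j - 1) / (1 + Real.exp (-x)) ^ (i + j)

lemma measurable_hfun (i : ℕ) : Measurable (hfun i) :=
  (measurable_id.pow_const _).div ((measurable_const.add measurable_id).pow_const _)

lemma hfun_nonneg (i : ℕ) {w : ℝ} (hw : 0 ≤ w) : 0 ≤ hfun i w :=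
  div_nonneg (pow_nonneg hw _) (pow_nonneg (by linarith) _)

lemma hfun_le_one (i : ℕ) {w : ℝ} (hw : 0 ≤ w) : hfun i w ≤ 1 := by
  rw [hfun, div_le_one (pow_pos (by linarith) _)]
  calc w ^ (i - 1) ≤ (1 + w) ^ (i - 1) := pow_le_pow_left₀ hw (by linarith) _
    _ ≤ (1 + w) ^ (i + 1) := pow_le_pow_right₀ (by linarith) (by omega)

lemma gfun_nonneg (i j : ℕ) (x : ℝ) : 0 ≤ gfun i j x := by
  have := Real.exp_pos (-x)
  exact div_nonneg (mul_nonneg (Nat.cast_nonneg _) (pow_nonneg this.le _))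
    (pow_nonneg (by linarith) _)

lemma measurable_gfun (i j : ℕ) : Measurable (gfun i j) := by
  apply Measurable.div
  · exact (measurable_neg.exp.pow_const _).const_mul _
  · exact (measurable_const.add measurable_neg.exp).pow_const _

/-- geometric series for `hfun`. -/
lemma hasSum_hfun {w : ℝ} (hw : 0 ≤ w) :
    HasSum (fun i : ℕ+ => hfun (i : ℕ) w) (1 / (1 + w)) := by
  have hw1 : (0:ℝ) < 1 + w := by linarith
  have hr : w / (1 + w) < 1 := (div_lt_one hw1).2 (by linarith)
  have hr0 : 0 ≤ w / (1 + w) := div_nonneg hw hw1.le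
  have h := (hasSum_geometric_of_lt_one hr0 hr).mul_right (1 / (1 + w) ^ 2)
  have key : HasSum (fun m : ℕ => hfun (m + 1) w)
      ((1 - w / (1 + w))⁻¹ * (1 / (1 + w) ^ 2)) := by
    convert h using 2 with m
    · rfl
    rw [hfun, div_pow, div_mul_div_comm, mul_one, ← pow_add]
    norm_num
  have hval : (1 - w / (1 + w))⁻¹ * (1 / (1 + w) ^ 2) = 1 / (1 + w) := by
    have : 1 - w / (1 + w) = 1 / (1 + w) := by field_simp; ring
    rw [this]
    field_simp
  rw [hval] at key
  have : (fun m : ℕ => hfun (m + 1) w) =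
      (fun i : ℕ+ => hfun (i : ℕ) w) ∘ (fun m : ℕ => (m.succPNat : ℕ+)) := by
    funext m; simp [Nat.succPNat]; rfl
  rw [this] at key
  exact (Equiv.pnatEquivNat.symm.hasSum_iff).1 key

lemma hasSum_hfun_gfun {w x : ℝ} (hw : 0 ≤ w) (j' : ℕ) :
    HasSum (fun i : ℕ+ => hfun (i : ℕ) w * gfun (i : ℕ) (j' + 1) x)
      (hfun (j' + 1) (Real.exp (-x) * (1 + w))) := by
  set q : ℝ := Real.exp (-x) with hq
  have hq0 : 0 < q := Real.exp_pos _
  have hw1 : (0:ℝ) < 1 + w := by linarith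
  have hq1 : (0:ℝ) < 1 + q := by linarith
  set r : ℝ := w / ((1 + w) * (1 + q)) with hrdef
  have hr0 : 0 ≤ r := div_nonneg hw (by positivity)
  have hr1 : r < 1 := by
    rw [hrdef, div_lt_one (by positivity)]
    nlinarith
  have hrnorm : ‖r‖ < 1 := by rwa [Real.norm_eq_abs, abs_of_nonneg hr0]
  set D : ℝ := q ^ j' / ((1 + w) ^ 2 * (1 + q) ^ (j' + 2)) with hD
  have h := (hasSum_choose_mul_geometric_of_norm_lt_one (j' + 1) hrnorm).mul_right D
  have hterm : (fun m : ℕ => ((m + (j' + 1)).choose (j' + 1) : ℝ) * r ^ m * D) =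
      fun m : ℕ => hfun (m + 1) w * gfun (m + 1) (j' + 1) x := by
    funext m
    rw [hfun, gfun, hrdef, hD, div_pow, mul_pow]
    have harg1 : m + 1 + (j' + 1) - 1 = m + (j' + 1) := by omega
    have harg2 : m + 1 - 1 = m := by omega
    have harg3 : j' + 1 - 1 = j' := by omega
    have harg4 : m + 1 + 1 = m + 2 := by omega
    have harg5 : m + 1 + (j' + 1) = m + (j' + 2) := by omega
    rw [harg1, harg2, harg3, harg4, harg5]
    rw [pow_add (1 + w) m 2, pow_add (1 + q) m (j' + 2)]
    field_simp
    ring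
  have hone : 1 - r = (1 + q * (1 + w)) / ((1 + w) * (1 + q)) := by
    rw [hrdef]
    field_simp
    ring
  have hval : 1 / (1 - r) ^ (j' + 1 + 1) * D = hfun (j' + 1) (q * (1 + w)) := by
    rw [hone, hfun, hD]
    have harg2 : j' + 1 - 1 = j' := by omega
    have harg4 : j' + 1 + 1 = j' + 2 := by omega
    rw [harg2, harg4]
    simp only [div_pow, mul_pow, one_div]
    have h1 : (0:ℝ) < 1 + q * (1 + w) := by positivity
    rw [inv_div, div_mul_div_comm]
    rw [div_eq_div_iff (by positivity) (by positivity)]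
    ring
  rw [hterm, hval] at h
  have hcomp : (fun m : ℕ => hfun (m + 1) w * gfun (m + 1) (j' + 1) x) =
      (fun i : ℕ+ => hfun (i : ℕ) w * gfun (i : ℕ) (j' + 1) x) ∘
        (fun m : ℕ => (m.succPNat : ℕ+)) := by
    funext m; simp [Nat.succPNat]; rfl
  rw [hcomp] at h
  exact (Equiv.pnatEquivNat.symm.hasSum_iff).1 h

lemma tsum_ofReal_hfun {w : ℝ} (hw : 0 ≤ w) :
    ∑' i : ℕ+, ENNReal.ofReal (hfun (i : ℕ) w) = ENNReal.ofReal (1 / (1 + w)) := by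
  rw [← (hasSum_hfun hw).tsum_eq]
  exact (ENNReal.ofReal_tsum_of_nonneg (fun i => hfun_nonneg _ hw)
    (hasSum_hfun hw).summable).symm

lemma tsum_ofReal_hfun_gfun {w x : ℝ} (hw : 0 ≤ w) (j' : ℕ) :
    ∑' i : ℕ+, ENNReal.ofReal (hfun (i : ℕ) w * gfun (i : ℕ) (j' + 1) x) =
      ENNReal.ofReal (hfun (j' + 1) (Real.exp (-x) * (1 + w))) := by
  rw [← (hasSum_hfun_gfun hw j').tsum_eq]
  exact (ENNReal.ofReal_tsum_of_nonneg
    (fun i => mul_nonneg (hfun_nonneg _ hw) (gfun_nonneg _ _ _))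
    (hasSum_hfun_gfun hw j').summable).symm

lemma wfn_decomp {Ω' : Type*} (X : ℕ → Ω' → ℝ) (ω' : Ω')
    (h : Summable (fun ℓ : ℕ => Real.exp (-(∑ k ∈ Finset.range (ℓ + 1), X k ω')))) :
    Wfn X ω' = Real.exp (-(X 0 ω')) * (1 + Wfn (fun ℓ => X (ℓ + 1)) ω') := by
  set f : ℕ → ℝ := fun ℓ => Real.exp (-(∑ k ∈ Finset.range (ℓ + 1), X k ω')) with hf
  have hshift : Wfn (fun ℓ => X (ℓ + 1)) ω' = Real.exp (X 0 ω') * ∑' ℓ, f (ℓ + 1) := by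
    rw [Wfn, ← tsum_mul_left]
    apply tsum_congr
    intro ℓ
    have hsum : ∑ k ∈ Finset.range (ℓ + 1 + 1), X k ω' =
        (∑ k ∈ Finset.range (ℓ + 1), X (k + 1) ω') + X 0 ω' :=
      Finset.sum_range_succ' (fun k => X k ω') (ℓ + 1)
    have : (∑ k ∈ Finset.range (ℓ + 1), X (k + 1) ω') =
        (∑ k ∈ Finset.range (ℓ + 1 + 1), X k ω') - X 0 ω' := by rw [hsum]; ring
    rw [hf]
    simp only
    rw [this, ← Real.exp_add]
    congr 1
    ring
  have hsplit : ∑' ℓ, f ℓ = f 0 + ∑' ℓ, f (ℓ + 1) := Summable.tsum_eq_zero_add h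
  have hW : Wfn X ω' = f 0 + ∑' ℓ, f (ℓ + 1) := hsplit
  rw [hW, hshift]
  have hf0 : f 0 = Real.exp (-(X 0 ω')) := by
    rw [hf]; simp [Finset.sum_range_one]
  rw [hf0]
  have hee : Real.exp (-(X 0 ω')) * Real.exp (X 0 ω') = 1 := by
    rw [← Real.exp_add]; simp
  rw [mul_add, mul_one, ← mul_assoc, hee, one_mul]

/-- Change of measure: integrating against the law `ν` of `X 0` equals integrating the
tilted sum over children. -/
lemma lintegral_nu_eq {Ω Ω' : Type*} [MeasurableSpace Ω] [MeasurableSpace Ω']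
    (μ : Measure Ω) (N : Ω → ℕ) (V : ℕ → Ω → ℝ)
    (hN : Measurable N) (hV : ∀ k, Measurable (V k))
    (μ' : Measure Ω') (X : ℕ → Ω' → ℝ)
    (hXlaw : ∀ s : Set ℝ, MeasurableSet s →
      μ'.map (X 0) s = ∫⁻ ω, ∑ k ∈ Finset.range (N ω),
        Set.indicator s (fun x => ENNReal.ofReal (Real.exp (-x))) (V k ω) ∂μ)
    (g : ℝ → ℝ≥0∞) (hg : Measurable g) :
    ∫⁻ x, g x ∂(μ'.map (X 0)) =
      ∫⁻ ω, ∑ k ∈ Finset.range (N ω),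
        g (V k ω) * ENNReal.ofReal (Real.exp (-(V k ω))) ∂μ := by
  have hA : ∀ k : ℕ, MeasurableSet {ω | k < N ω} := fun k =>
    hN (measurableSet_Ioi (a := k))
  set dens : ℝ → ℝ≥0∞ := fun x => ENNReal.ofReal (Real.exp (-x)) with hdens
  have hdens_meas : Measurable dens := measurable_neg.exp.ennreal_ofReal
  set νk : ℕ → Measure ℝ := fun k =>
    ((μ.restrict {ω | k < N ω}).map (V k)).withDensity dens with hνk
  have key : ∀ g : ℝ → ℝ≥0∞, Measurable g →
      ∫⁻ x, g x ∂(Measure.sum νk) =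
        ∫⁻ ω, ∑ k ∈ Finset.range (N ω), g (V k ω) * dens (V k ω) ∂μ := by
    intro g hg
    rw [lintegral_sum_measure]
    have hone : ∀ k : ℕ, ∫⁻ x, g x ∂(νk k) =
        ∫⁻ ω, ({ω | k < N ω}).indicator
          (fun ω => g (V k ω) * dens (V k ω)) ω ∂μ := by
      intro k
      rw [hνk]
      simp only
      rw [lintegral_withDensity_eq_lintegral_mul _ hdens_meas hg]
      simp only [Pi.mul_apply]
      rw [lintegral_map (f := fun a => dens a * g a) (hdens_meas.mul hg) (hV k)]
      rw [← lintegral_indicator (hA k)]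
      congr 1
      funext ω
      rw [Set.indicator_apply, Set.indicator_apply]
      by_cases hω : ω ∈ {ω | k < N ω} <;> simp [hω, mul_comm]
    simp_rw [hone]
    rw [← lintegral_tsum]
    · apply lintegral_congr
      intro ω
      rw [tsum_eq_sum (s := Finset.range (N ω))]
      · apply Finset.sum_congr rfl
        intro k hk
        rw [Finset.mem_range] at hk
        rw [Set.indicator_of_mem (by exact hk)]
      · intro k hk
        rw [Finset.mem_range, not_lt] at hk
        exact Set.indicator_of_notMem (by simp [Set.mem_setOf_eq]; omega) _
    · intro k
      exact (((hg.comp (hV k)).mul (hdens_meas.comp (hV k))).indicator (hA k)).aemeasurable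
  have hmeq : μ'.map (X 0) = Measure.sum νk := by
    ext s hs
    rw [hXlaw s hs, Measure.sum_apply _ hs]
    have := key (s.indicator (fun _ => 1)) (measurable_const.indicator hs)
    rw [lintegral_sum_measure] at this
    have hind : ∀ k, ∫⁻ x, s.indicator (fun _ => (1:ℝ≥0∞)) x ∂(νk k) = νk k s := by
      intro k
      rw [lintegral_indicator_const hs, one_mul]
    have h3 : ∀ (ω : Ω) (k : ℕ), Set.indicator s dens (V k ω) =
        s.indicator (fun _ => (1:ℝ≥0∞)) (V k ω) * dens (V k ω) := by
      intro ω k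
      rw [Set.indicator_apply, Set.indicator_apply]
      by_cases hV' : V k ω ∈ s <;> simp [hV']
    simp_rw [h3]
    rw [← this]
    exact tsum_congr fun k => hind k
  rw [hmeq]
  exact key g hg

lemma map_pi_eq {Ω' : Type*} [MeasurableSpace Ω'] (μ' : Measure Ω') [IsProbabilityMeasure μ']
    (X : ℕ → Ω' → ℝ) (hXmeas : ∀ ℓ, Measurable (X ℓ))
    (hXindep : iIndepFun X μ')
    (hXident : ∀ ℓ, IdentDistrib (X ℓ) (X 0) μ' μ')
    (g : ℕ → ℕ) (hg : Function.Injective g) (s : Finset ℕ) :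
    μ'.map (fun ω' (i : s) => X (g i) ω') =
      Measure.pi (fun _ : s => μ'.map (X 0)) := by
  haveI : IsProbabilityMeasure (μ'.map (X 0)) :=
    Measure.isProbabilityMeasure_map (hXmeas 0).aemeasurable
  symm
  apply Measure.pi_eq
  intro t ht
  set u : ℕ → Set ℝ := fun n =>
    if h : ∃ i : ℕ, (i ∈ s ∧ g i = n) then t ⟨h.choose, h.choose_spec.1⟩ else Set.univ with hu
  have hu_meas : ∀ n, MeasurableSet (u n) := by
    intro n; rw [hu]; dsimp only; split
    · exact ht _
    · exact MeasurableSet.univ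
  have hu_g : ∀ i : s, u (g i) = t i := by
    rintro ⟨i, hi⟩
    have h : ∃ i' : ℕ, i' ∈ s ∧ g i' = g i := ⟨i, hi, rfl⟩
    rw [hu]; dsimp only
    rw [dif_pos h]
    have h2 : h.choose = i := hg h.choose_spec.2
    exact congrArg t (Subtype.ext h2)
  have hpre : (fun ω' (i : s) => X (g i) ω') ⁻¹' (Set.pi Set.univ t) =
      ⋂ n ∈ Finset.image g s, X n ⁻¹' u n := by
    ext ω
    simp only [Set.mem_preimage, Set.mem_pi, Set.mem_univ, forall_true_left, Set.mem_iInter,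
      Finset.mem_image]
    constructor
    · rintro h n ⟨i, hi, rfl⟩
      rw [hu_g ⟨i, hi⟩]
      exact h ⟨i, hi⟩
    · rintro h ⟨i, hi⟩
      have := h (g i) ⟨i, hi, rfl⟩
      rwa [hu_g ⟨i, hi⟩] at this
  rw [Measure.map_apply (measurable_pi_lambda _ (fun i => hXmeas _)) (MeasurableSet.univ_pi ht)]
  rw [hpre]
  rw [hXindep.meas_biInter (fun n _ => ⟨u n, hu_meas n, rfl⟩)]
  have hfac : ∀ n, μ' (X n ⁻¹' u n) = μ'.map (X 0) (u n) := by
    intro n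
    rw [← (hXident n).map_eq, Measure.map_apply (hXmeas n) (hu_meas n)]
  calc ∏ n ∈ Finset.image g s, μ' (X n ⁻¹' u n)
      = ∏ i ∈ s, μ' (X (g i) ⁻¹' u (g i)) :=
        (Finset.prod_image (fun i _ j _ h => hg h))
    _ = ∏ i ∈ s.attach, μ' (X (g ↑i) ⁻¹' u (g ↑i)) := (Finset.prod_attach _ _).symm
    _ = ∏ i : s, μ'.map (X 0) (t i) := by
        rw [Finset.univ_eq_attach]
        apply Finset.prod_congr rfl
        intro i _
        rw [hfac, hu_g i]

lemma map_shift_eq {Ω' : Type*} [MeasurableSpace Ω'] (μ' : Measure Ω') [IsProbabilityMeasure μ']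
    (X : ℕ → Ω' → ℝ) (hXmeas : ∀ ℓ, Measurable (X ℓ))
    (hXindep : iIndepFun X μ')
    (hXident : ∀ ℓ, IdentDistrib (X ℓ) (X 0) μ' μ') :
    μ'.map (fun ω' ℓ => X (ℓ + 1) ω') = μ'.map (fun ω' ℓ => X ℓ ω') := by
  have hm1 : Measurable (fun ω' ℓ => X (ℓ + 1) ω') :=
    measurable_pi_lambda _ (fun ℓ => hXmeas _)
  have hm2 : Measurable (fun ω' ℓ => X ℓ ω') :=
    measurable_pi_lambda _ (fun ℓ => hXmeas _)
  haveI i1 : IsProbabilityMeasure (μ'.map (fun ω' ℓ => X (ℓ + 1) ω')) :=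
    Measure.isProbabilityMeasure_map hm1.aemeasurable
  haveI i2 : IsProbabilityMeasure (μ'.map (fun ω' ℓ => X ℓ ω')) :=
    Measure.isProbabilityMeasure_map hm2.aemeasurable
  apply MeasureTheory.ext_of_generate_finite (measurableCylinders (fun _ : ℕ => ℝ))
    generateFrom_measurableCylinders.symm isPiSystem_measurableCylinders
  · intro c hc
    obtain ⟨I, S, hS, rfl⟩ := (mem_measurableCylinders c).1 hc
    have hres : Measurable ((I.restrict) : (ℕ → ℝ) → (I → ℝ)) := Finset.measurable_restrict _
    simp only [cylinder]
    rw [← Measure.map_apply hres hS, ← Measure.map_apply hres hS]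
    rw [Measure.map_map hres hm1, Measure.map_map hres hm2]
    have hp1 := map_pi_eq μ' X hXmeas hXindep hXident (fun n => n + 1)
      (fun a b h => by simpa using h) I
    have hp2 := map_pi_eq μ' X hXmeas hXindep hXident (fun n => n) (fun a b h => h) I
    have e1 : (I.restrict ∘ fun ω' ℓ => X (ℓ + 1) ω') =
        fun ω' (i : I) => X ((fun n => n + 1) (i : ℕ)) ω' := rfl
    have e2 : (I.restrict ∘ fun ω' ℓ => X ℓ ω') =
        fun ω' (i : I) => X ((fun n => n) (i : ℕ)) ω' := rfl
    rw [e1, e2, hp1, hp2]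
  · simp

lemma identDistrib_wfn_shift {Ω' : Type*} [MeasurableSpace Ω'] (μ' : Measure Ω')
    [IsProbabilityMeasure μ']
    (X : ℕ → Ω' → ℝ) (hXmeas : ∀ ℓ, Measurable (X ℓ))
    (hXindep : iIndepFun X μ')
    (hXident : ∀ ℓ, IdentDistrib (X ℓ) (X 0) μ' μ') :
    IdentDistrib (Wfn (fun ℓ => X (ℓ + 1))) (Wfn X) μ' μ' := by
  have hm1 : Measurable (fun ω' ℓ => X (ℓ + 1) ω') :=
    measurable_pi_lambda _ (fun ℓ => hXmeas _)
  have hm2 : Measurable (fun ω' ℓ => X ℓ ω') :=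
    measurable_pi_lambda _ (fun ℓ => hXmeas _)
  have hseq : IdentDistrib (fun ω' ℓ => X (ℓ + 1) ω') (fun ω' ℓ => X ℓ ω') μ' μ' :=
    ⟨hm1.aemeasurable, hm2.aemeasurable, map_shift_eq μ' X hXmeas hXindep hXident⟩
  exact hseq.comp measurable_gfn

lemma indepFun_X0_wfn_shift {Ω' : Type*} [MeasurableSpace Ω'] (μ' : Measure Ω')
    (X : ℕ → Ω' → ℝ) (hXmeas : ∀ ℓ, Measurable (X ℓ))
    (hXindep : iIndepFun X μ') :
    IndepFun (X 0) (Wfn (fun ℓ => X (ℓ + 1))) μ' := by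
  set mT : MeasurableSpace Ω' :=
    ⨆ n ∈ {n : ℕ | 1 ≤ n}, MeasurableSpace.comap (X n) inferInstance with hmT
  set mZ : MeasurableSpace Ω' :=
    ⨆ n ∈ ({0} : Set ℕ), MeasurableSpace.comap (X n) inferInstance with hmZ
  have hdisj : Disjoint ({0} : Set ℕ) {n : ℕ | 1 ≤ n} := by
    rw [Set.disjoint_left]
    intro n hn h1
    simp only [Set.mem_singleton_iff] at hn
    simp only [Set.mem_setOf_eq] at h1
    omega
  have hindep : Indep mZ mT μ' :=
    indep_iSup_of_disjoint (fun n => (hXmeas n).comap_le) hXindep.iIndep hdisj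
  have hWmeas : Measurable[mT] (Wfn (fun ℓ => X (ℓ + 1))) := by
    have hseq : Measurable[mT] (fun ω' ℓ => X (ℓ + 1) ω') := by
      refine @measurable_pi_lambda Ω' ℕ (fun _ => ℝ) mT _ _ ?_
      intro ℓ
      apply Measurable.of_comap_le
      exact le_biSup (fun n => MeasurableSpace.comap (X n) inferInstance)
        (show ℓ + 1 ∈ {n : ℕ | 1 ≤ n} by simp only [Set.mem_setOf_eq]; omega)
    exact measurable_gfn.comp hseq
  rw [IndepFun_iff]
  intro t1 t2 ht1 ht2
  apply (Indep_iff mZ mT μ').1 hindep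
  · have hle : MeasurableSpace.comap (X 0) inferInstance ≤ mZ :=
      le_biSup (fun n => MeasurableSpace.comap (X n) inferInstance)
        (show (0:ℕ) ∈ ({0} : Set ℕ) from rfl)
    exact hle _ ht1
  · obtain ⟨t2', ht2', rfl⟩ := ht2
    exact hWmeas ht2'

lemma lintegral_pair_eq {Ω' : Type*} [MeasurableSpace Ω'] (μ' : Measure Ω')
    [IsProbabilityMeasure μ']
    (X : ℕ → Ω' → ℝ) (hXmeas : ∀ ℓ, Measurable (X ℓ))
    (hXindep : iIndepFun X μ')
    (hXident : ∀ ℓ, IdentDistrib (X ℓ) (X 0) μ' μ')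
    (F : ℝ → ℝ → ℝ≥0∞) (hF : Measurable (Function.uncurry F)) :
    ∫⁻ ω', F (X 0 ω') (Wfn (fun ℓ => X (ℓ + 1)) ω') ∂μ' =
      ∫⁻ x, ∫⁻ w, F x w ∂(μ'.map (Wfn X)) ∂(μ'.map (X 0)) := by
  have hWt : Measurable (Wfn (fun ℓ => X (ℓ + 1))) := measurable_wfn (fun ℓ => hXmeas _)
  have hWmeas : Measurable (Wfn X) := measurable_wfn hXmeas
  haveI : IsProbabilityMeasure (μ'.map (X 0)) :=
    Measure.isProbabilityMeasure_map (hXmeas 0).aemeasurable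
  haveI : IsProbabilityMeasure (μ'.map (Wfn X)) :=
    Measure.isProbabilityMeasure_map hWmeas.aemeasurable
  have hpair : Measurable (fun ω' => (X 0 ω', Wfn (fun ℓ => X (ℓ + 1)) ω')) :=
    (hXmeas 0).prodMk hWt
  have hindep := indepFun_X0_wfn_shift μ' X hXmeas hXindep
  have hmapeq : μ'.map (fun ω' => (X 0 ω', Wfn (fun ℓ => X (ℓ + 1)) ω')) =
      (μ'.map (X 0)).prod (μ'.map (Wfn X)) := by
    rw [(indepFun_iff_map_prod_eq_prod_map_map (hXmeas 0).aemeasurable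
      hWt.aemeasurable).1 hindep]
    rw [(identDistrib_wfn_shift μ' X hXmeas hXindep hXident).map_eq]
  calc ∫⁻ ω', F (X 0 ω') (Wfn (fun ℓ => X (ℓ + 1)) ω') ∂μ'
      = ∫⁻ p, Function.uncurry F p
          ∂(μ'.map (fun ω' => (X 0 ω', Wfn (fun ℓ => X (ℓ + 1)) ω'))) := by
        rw [lintegral_map hF hpair]
        rfl
    _ = ∫⁻ x, ∫⁻ w, F x w ∂(μ'.map (Wfn X)) ∂(μ'.map (X 0)) := by
        rw [hmapeq, lintegral_prod _ hF.aemeasurable]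
        rfl

/-- assume `ψ(1) = 1` and let `(X_ℓ)_{ℓ≥1}` be i.i.d. real random
variables (on their own probability space, hence independent of `(N,(V_k))`) whose
common law is determined by `E[f(X_1)] = E[Σ_{k=1}^N f(V_k)·e^{-V_k}]`. Set
`W = Σ_{ℓ≥1} exp(-(X_1+⋯+X_ℓ))` and assume `W < ∞` a.s. (i.e. the series is a.s.
summable). Then `a(i) = E[W^{i-1}/(1+W)^{i+1}]/E[1/(1+W)]` is a left eigenvector of
the mean matrix `M` for the eigenvalue `1`: for every positive integer `j`,
`Σ_{i≥1} a(i)·M(i,j) = a(j)`; moreover `Σ_{i≥1} a(i) = 1`. -/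
theorem brw_left_eigenvector {Ω Ω' : Type*} [MeasurableSpace Ω] [MeasurableSpace Ω']
    (μ : Measure Ω) [IsProbabilityMeasure μ] (N : Ω → ℕ) (V : ℕ → Ω → ℝ)
    (hN : Measurable N) (hV : ∀ k, Measurable (V k))
    (μ' : Measure Ω') [IsProbabilityMeasure μ'] (X : ℕ → Ω' → ℝ)
    (hXmeas : ∀ ℓ, Measurable (X ℓ))
    (hXindep : iIndepFun X μ')
    (hXident : ∀ ℓ, IdentDistrib (X ℓ) (X 0) μ' μ')
    (hXlaw : ∀ s : Set ℝ, MeasurableSet s →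
      μ'.map (X 0) s = ∫⁻ ω, ∑ k ∈ Finset.range (N ω),
        Set.indicator s (fun x => ENNReal.ofReal (Real.exp (-x))) (V k ω) ∂μ)
    (hψ1 : psiFn μ N V 1 = 1)
    (hW : ∀ᵐ ω' ∂μ', Summable
      (fun ℓ : ℕ => Real.exp (-(∑ k ∈ Finset.range (ℓ + 1), X k ω')))) :
    (∀ j : ℕ+, ∑' i : ℕ+,
        ENNReal.ofReal (aCoef μ' X (i : ℕ)) * Mbrw μ N V (i : ℕ) (j : ℕ) =
          ENNReal.ofReal (aCoef μ' X (j : ℕ))) ∧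
      ∑' i : ℕ+, aCoef μ' X (i : ℕ) = 1 := by
  
  classical
  have hWmeas : Measurable (Wfn X) := measurable_wfn hXmeas
  have hWnn : ∀ ω', 0 ≤ Wfn X ω' := wfn_nonneg X
  set ν : Measure ℝ := μ'.map (X 0) with hν
  set ρ : Measure ℝ := μ'.map (Wfn X) with hρ
  haveI hνP : IsProbabilityMeasure ν := Measure.isProbabilityMeasure_map (hXmeas 0).aemeasurable
  haveI hρP : IsProbabilityMeasure ρ := Measure.isProbabilityMeasure_map hWmeas.aemeasurable
  set A : ℕ → ℝ≥0∞ := fun i => ∫⁻ ω', ENNReal.ofReal (hfun i (Wfn X ω')) ∂μ' with hA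
  set c : ℝ≥0∞ := ∫⁻ ω', ENNReal.ofReal (1 / (1 + Wfn X ω')) ∂μ' with hc
  have hAle : ∀ i, A i ≤ 1 := by
    intro i
    simp only [hA]
    calc ∫⁻ ω', ENNReal.ofReal (hfun i (Wfn X ω')) ∂μ'
        ≤ ∫⁻ _, 1 ∂μ' :=
          lintegral_mono (fun ω' => ENNReal.ofReal_le_one.2 (hfun_le_one i (hWnn ω')))
      _ = 1 := by simp
  have hAne : ∀ i, A i ≠ ∞ := fun i => ((hAle i).trans_lt ENNReal.one_lt_top).ne
  have hcmb : Measurable (fun ω' => ENNReal.ofReal (1 / (1 + Wfn X ω'))) :=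
    (measurable_const.div (measurable_const.add hWmeas)).ennreal_ofReal
  have hcle : c ≤ 1 := by
    simp only [hc]
    calc ∫⁻ ω', ENNReal.ofReal (1 / (1 + Wfn X ω')) ∂μ'
        ≤ ∫⁻ _, 1 ∂μ' := by
          apply lintegral_mono
          intro ω'
          apply ENNReal.ofReal_le_one.2
          rw [div_le_one (by nlinarith [hWnn ω'])]
          nlinarith [hWnn ω']
      _ = 1 := by simp
  have hcne : c ≠ ∞ := (hcle.trans_lt ENNReal.one_lt_top).ne
  have hcpos : 0 < c := by
    simp only [hc]
    rw [lintegral_pos_iff_support hcmb]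
    have hsupp : Function.support (fun ω' => ENNReal.ofReal (1 / (1 + Wfn X ω'))) =
        Set.univ := by
      ext ω'
      simp only [Function.mem_support, ne_eq, Set.mem_univ, iff_true]
      intro h
      rw [ENNReal.ofReal_eq_zero] at h
      have h1 : (0:ℝ) < 1 + Wfn X ω' := by nlinarith [hWnn ω']
      have := one_div_pos.2 h1
      linarith
    rw [hsupp]
    simp
  have hctR : 0 < c.toReal := ENNReal.toReal_pos hcpos.ne' hcne
  have hint : ∀ i : ℕ, ∫ ω', hfun i (Wfn X ω') ∂μ' = (A i).toReal := by
    intro i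
    simp only [hA]
    rw [integral_eq_lintegral_of_nonneg_ae (ae_of_all _ (fun ω' => hfun_nonneg i (hWnn ω')))
      ((measurable_hfun i).comp hWmeas).aestronglyMeasurable]
  have hintc : ∫ ω', 1 / (1 + Wfn X ω') ∂μ' = c.toReal := by
    simp only [hc]
    rw [integral_eq_lintegral_of_nonneg_ae (f := fun ω' => 1 / (1 + Wfn X ω'))
      (ae_of_all _ (fun ω' => by
        have h1 : (0:ℝ) < 1 + Wfn X ω' := by nlinarith [hWnn ω']
        show 0 ≤ 1 / (1 + Wfn X ω')
        positivity))
      (measurable_const.div (measurable_const.add hWmeas)).aestronglyMeasurable]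
  have haCoef : ∀ i : ℕ, aCoef μ' X i = (A i).toReal / c.toReal := by
    intro i
    rw [aCoef, ← hint i, ← hintc]
    rfl
  have hofReal_a : ∀ i : ℕ, ENNReal.ofReal (aCoef μ' X i) = A i / c := by
    intro i
    rw [haCoef i, ENNReal.ofReal_div_of_pos hctR, ENNReal.ofReal_toReal (hAne i),
      ENNReal.ofReal_toReal hcne]
  have hAρ : ∀ i, A i = ∫⁻ w, ENNReal.ofReal (hfun i w) ∂ρ := by
    intro i
    simp only [hA, hρ]
    rw [lintegral_map (measurable_hfun i).ennreal_ofReal hWmeas]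
  have hM : ∀ i j' : ℕ, Mbrw μ N V i (j' + 1) =
      ∫⁻ x, ENNReal.ofReal (gfun i (j' + 1) x) ∂ν := by
    intro i j'
    simp only [hν]
    rw [Mbrw, lintegral_nu_eq μ N V hN hV μ' X hXlaw _
      (measurable_gfun i (j' + 1)).ennreal_ofReal]
    apply lintegral_congr
    intro ω
    rw [ENNReal.ofReal_sum_of_nonneg (fun k _ => by
      have h2 := (Real.exp_pos (-((j' + 1 : ℕ) : ℝ) * V k ω)).le
      have h1 : (0:ℝ) < 1 + Real.exp (-V k ω) := by positivity
      positivity)]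
    apply Finset.sum_congr rfl
    intro k _
    rw [← ENNReal.ofReal_mul (gfun_nonneg _ _ _)]
    congr 1
    have hexp : Real.exp (-((j' + 1 : ℕ) : ℝ) * V k ω) = Real.exp (-V k ω) ^ (j' + 1) := by
      rw [← Real.exp_nat_mul]
      congr 1
      push_cast
      ring
    rw [gfun, hexp]
    have harg : j' + 1 - 1 = j' := by omega
    rw [harg, pow_succ]
    have hD : ((1:ℝ) + Real.exp (-V k ω)) ^ (i + (j' + 1)) ≠ 0 := by positivity
    field_simp
  have hcore : ∀ j' : ℕ, ∑' i : ℕ+, A (i : ℕ) * Mbrw μ N V (i : ℕ) (j' + 1) = A (j' + 1) := by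
    intro j'
    have hρ_nonneg : ∀ᵐ w ∂ρ, 0 ≤ w := by
      have h0 : ∀ᵐ w ∂(μ'.map (Wfn X)), w ∈ Set.Ici (0:ℝ) :=
        (MeasureTheory.ae_map_iff hWmeas.aemeasurable measurableSet_Ici).2
          (ae_of_all _ hWnn)
      simpa only [Set.mem_Ici] using h0
    have hm_unc : ∀ i : ℕ+, Measurable (fun p : ℝ × ℝ =>
        ENNReal.ofReal (hfun (i : ℕ) p.1 * gfun (i : ℕ) (j' + 1) p.2)) := by
      intro i
      exact (((measurable_hfun (i : ℕ)).comp measurable_fst).mul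
        ((measurable_gfun (i : ℕ) (j' + 1)).comp measurable_snd)).ennreal_ofReal
    have step1 : ∀ i : ℕ+, A (i : ℕ) * Mbrw μ N V (i : ℕ) (j' + 1) =
        ∫⁻ w, ∫⁻ x, ENNReal.ofReal (hfun (i : ℕ) w * gfun (i : ℕ) (j' + 1) x) ∂ν ∂ρ := by
      intro i
      rw [hAρ i, hM i j']
      rw [← lintegral_mul_const _ (measurable_hfun (i : ℕ)).ennreal_ofReal]
      apply lintegral_congr
      intro w
      rw [← lintegral_const_mul _ (measurable_gfun (i : ℕ) (j' + 1)).ennreal_ofReal]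
      apply lintegral_congr
      intro x
      rw [ENNReal.ofReal_mul' (gfun_nonneg (i : ℕ) (j' + 1) x)]
    have hswap_meas : Measurable (fun p : ℝ × ℝ =>
        ENNReal.ofReal (hfun (j' + 1) (Real.exp (-p.2) * (1 + p.1)))) :=
      ((measurable_hfun (j' + 1)).comp
        ((measurable_snd.neg.exp).mul (measurable_const.add measurable_fst))).ennreal_ofReal
    have hF_meas : Measurable (Function.uncurry (fun x w : ℝ =>
        ENNReal.ofReal (hfun (j' + 1) (Real.exp (-x) * (1 + w))))) :=
      ((measurable_hfun (j' + 1)).comp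
        ((measurable_fst.neg.exp).mul (measurable_const.add measurable_snd))).ennreal_ofReal
    calc ∑' i : ℕ+, A (i : ℕ) * Mbrw μ N V (i : ℕ) (j' + 1)
        = ∑' i : ℕ+, ∫⁻ w, ∫⁻ x,
            ENNReal.ofReal (hfun (i : ℕ) w * gfun (i : ℕ) (j' + 1) x) ∂ν ∂ρ :=
          tsum_congr step1
      _ = ∫⁻ w, ∑' i : ℕ+, ∫⁻ x,
            ENNReal.ofReal (hfun (i : ℕ) w * gfun (i : ℕ) (j' + 1) x) ∂ν ∂ρ :=
          (lintegral_tsum (fun i => ((hm_unc i).lintegral_prod_right').aemeasurable)).symm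
      _ = ∫⁻ w, ∫⁻ x, ∑' i : ℕ+,
            ENNReal.ofReal (hfun (i : ℕ) w * gfun (i : ℕ) (j' + 1) x) ∂ν ∂ρ := by
          apply lintegral_congr
          intro w
          exact (lintegral_tsum (f := fun (i : ℕ+) (x : ℝ) =>
            ENNReal.ofReal (hfun (i : ℕ) w * gfun (i : ℕ) (j' + 1) x)) (fun i =>
            (((measurable_gfun (i : ℕ) (j' + 1)).const_mul _).ennreal_ofReal).aemeasurable)).symm
      _ = ∫⁻ w, ∫⁻ x,
            ENNReal.ofReal (hfun (j' + 1) (Real.exp (-x) * (1 + w))) ∂ν ∂ρ := by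
          apply lintegral_congr_ae
          filter_upwards [hρ_nonneg] with w hw
          apply lintegral_congr
          intro x
          exact tsum_ofReal_hfun_gfun hw j'
      _ = ∫⁻ x, ∫⁻ w,
            ENNReal.ofReal (hfun (j' + 1) (Real.exp (-x) * (1 + w))) ∂ρ ∂ν :=
          lintegral_lintegral_swap hswap_meas.aemeasurable
      _ = ∫⁻ ω', ENNReal.ofReal (hfun (j' + 1)
            (Real.exp (-(X 0 ω')) * (1 + Wfn (fun ℓ => X (ℓ + 1)) ω'))) ∂μ' :=
          (lintegral_pair_eq μ' X hXmeas hXindep hXident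
            (fun x w => ENNReal.ofReal (hfun (j' + 1) (Real.exp (-x) * (1 + w))))
            hF_meas).symm
      _ = A (j' + 1) := by
          simp only [hA]
          apply lintegral_congr_ae
          filter_upwards [hW] with ω' hsum
          rw [wfn_decomp X ω' hsum]
  constructor
  · intro j
    obtain ⟨j', hj'⟩ : ∃ j' : ℕ, (j : ℕ) = j' + 1 :=
      ⟨(j : ℕ) - 1, (Nat.sub_add_cancel j.pos).symm⟩
    calc ∑' i : ℕ+, ENNReal.ofReal (aCoef μ' X (i : ℕ)) * Mbrw μ N V (i : ℕ) (j : ℕ)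
        = ∑' i : ℕ+, (A (i : ℕ) * Mbrw μ N V (i : ℕ) (j : ℕ)) * c⁻¹ := by
          apply tsum_congr
          intro i
          rw [hofReal_a (i : ℕ), ENNReal.div_eq_inv_mul]
          ring
      _ = (∑' i : ℕ+, A (i : ℕ) * Mbrw μ N V (i : ℕ) (j : ℕ)) * c⁻¹ :=
          ENNReal.tsum_mul_right
      _ = A (j : ℕ) * c⁻¹ := by rw [hj', hcore j']
      _ = ENNReal.ofReal (aCoef μ' X (j : ℕ)) := by
          rw [hofReal_a (j : ℕ), ENNReal.div_eq_inv_mul]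
          ring
  · have hsumA : ∑' i : ℕ+, A (i : ℕ) = c := by
      simp only [hA, hc]
      rw [← lintegral_tsum (f := fun (i : ℕ+) (ω' : Ω') =>
        ENNReal.ofReal (hfun (i : ℕ) (Wfn X ω'))) (fun i =>
        (((measurable_hfun (i : ℕ)).comp hWmeas).ennreal_ofReal).aemeasurable)]
      apply lintegral_congr
      intro ω'
      exact tsum_ofReal_hfun (hWnn ω')
    calc ∑' i : ℕ+, aCoef μ' X (i : ℕ)
        = ∑' i : ℕ+, (A (i : ℕ)).toReal * (c.toReal)⁻¹ := by
          apply tsum_congr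
          intro i
          rw [haCoef (i : ℕ), div_eq_mul_inv]
      _ = (∑' i : ℕ+, (A (i : ℕ)).toReal) * (c.toReal)⁻¹ := tsum_mul_right
      _ = c.toReal * (c.toReal)⁻¹ := by
          rw [← ENNReal.tsum_toReal_eq (fun i => hAne _), hsumA]
      _ = 1 := mul_inv_cancel₀ hctR.ne'
end

section
/- For all reals u > 0, w > 0 and every positive integer j, Σ_{i≥1} (w^{i-1}/(1+w)^{i+1}) · (i+j-1 choose j) · u^j/(1+u)^{i+j} = u^j·(1+w)^{j-1}/(1 + u·(1+w))^{j+1}. -/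
/-- For all reals `u > 0`, `w > 0` and every positive integer `j`,
`Σ_{i≥1} (w^(i-1)/(1+w)^(i+1))·(i+j-1 choose j)·u^j/(1+u)^(i+j)
  = u^j·(1+w)^(j-1)/(1+u·(1+w))^(j+1)`. -/
theorem left_eigenvector_pointwise_identity (u w : ℝ) (hu : 0 < u) (hw : 0 < w)
    (j : ℕ+) :
    ∑' i : ℕ+, (w ^ ((i : ℕ) - 1) / (1 + w) ^ ((i : ℕ) + 1) *
        (((i : ℕ) + (j : ℕ) - 1).choose (j : ℕ) : ℝ) *
        u ^ (j : ℕ) / (1 + u) ^ ((i : ℕ) + (j : ℕ))) =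
      u ^ (j : ℕ) * (1 + w) ^ ((j : ℕ) - 1) / (1 + u * (1 + w)) ^ ((j : ℕ) + 1) := by
  obtain ⟨k, hk⟩ : ∃ k, (j : ℕ) = k + 1 :=
    ⟨(j : ℕ) - 1, (Nat.succ_pred_eq_of_pos j.pos).symm⟩
  have hw1 : (0:ℝ) < 1 + w := by linarith
  have hu1 : (0:ℝ) < 1 + u := by linarith
  have huw : (0:ℝ) < 1 + u * (1 + w) := by positivity
  set x : ℝ := w / ((1 + w) * (1 + u)) with hx
  have hx0 : 0 < x := by positivity
  have hx1 : x < 1 := by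
    rw [hx, div_lt_one (by positivity)]
    nlinarith
  have hxn : ‖x‖ < 1 := by rw [Real.norm_eq_abs, abs_of_pos hx0]; exact hx1
  have key := tsum_choose_mul_geometric_of_norm_lt_one (𝕜 := ℝ) (j : ℕ) hxn
  have h1x : 1 - x = (1 + u * (1 + w)) / ((1 + w) * (1 + u)) := by
    rw [hx]; field_simp; ring
  set c : ℝ := u ^ (j : ℕ) / ((1 + w) ^ 2 * (1 + u) ^ ((j : ℕ) + 1)) with hc
  calc ∑' i : ℕ+, (w ^ ((i : ℕ) - 1) / (1 + w) ^ ((i : ℕ) + 1) *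
        (((i : ℕ) + (j : ℕ) - 1).choose (j : ℕ) : ℝ) *
        u ^ (j : ℕ) / (1 + u) ^ ((i : ℕ) + (j : ℕ)))
      = ∑' n : ℕ, c * (((n + (j : ℕ)).choose (j : ℕ) : ℝ) * x ^ n) := by
        rw [← Equiv.pnatEquivNat.symm.tsum_eq]
        refine tsum_congr fun n => ?_
        have hcoe : ((Equiv.pnatEquivNat.symm n : ℕ+) : ℕ) = n + 1 := rfl
        rw [hcoe]
        have h1 : n + 1 + (j : ℕ) - 1 = n + (j : ℕ) := by omega
        rw [h1, hc, hx]
        rw [div_pow, mul_pow]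
        have : n + 1 - 1 = n := rfl
        rw [this]
        field_simp
        ring
    _ = c * (1 / (1 - x) ^ ((j : ℕ) + 1)) := by rw [tsum_mul_left, key]
    _ = u ^ (j : ℕ) * (1 + w) ^ ((j : ℕ) - 1) / (1 + u * (1 + w)) ^ ((j : ℕ) + 1) := by
        rw [h1x, hc, hk]
        have : (k + 1 : ℕ) - 1 = k := rfl
        rw [this]
        rw [div_pow, one_div_div, mul_pow]
        field_simp
        ring
end
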